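/- arXiv:2502.18053 — 5 statements merged into one kernel-verified Lean document; each statement's English description precedes it below -/
import Mathlib

section
/- Let $k$ be a field and let $g_1,\dots,g_d \in X\cdot k[[X]]$ be pairwise distinct power series with zero constant term. If $F(X,Y) \in k[[X,Y]]$ satisfies $F(X, g_b(X)) = 0$ for all $b = 1,\dots,d$, then $F(X,Y)$ is divisible by $\prod_{b=1}^d (Y - g_b(X))$ in $k[[X,Y]]$. -/
/-- Substitution `F(X, g(X))` for `F ∈ k[[X,Y]] = (k[[X]])[[Y]]` and `g ∈ k[[X]]`
with zero constant term. -/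
noncomputable def PSEvalY {k : Type*} [CommRing k] (F : PowerSeries (PowerSeries k))
    (g : PowerSeries k) : PowerSeries k :=
  PowerSeries.mk fun m => ∑ n ∈ Finset.range (m + 1),
    PowerSeries.coeff (R := k) m (PowerSeries.coeff (R := PowerSeries k) n F * g ^ n)

namespace PSaux

open PowerSeries

variable {k : Type*} [CommRing k]

/-- Partial sum approximation. -/
noncomputable def Sval (F : PowerSeries (PowerSeries k)) (g : PowerSeries k) (N : ℕ) :
    PowerSeries k :=
  ∑ n ∈ Finset.range N, PowerSeries.coeff (R := PowerSeries k) n F * g ^ n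

lemma eq_of_forall_X_pow_dvd (a b : PowerSeries k) (h : ∀ N, (X : PowerSeries k) ^ N ∣ a - b) :
    a = b := by
  ext m
  have := (X_pow_dvd_iff.mp (h (m + 1))) m (Nat.lt_succ_self m)
  rw [map_sub, sub_eq_zero] at this
  exact this

lemma X_pow_dvd_sub_Sval (F : PowerSeries (PowerSeries k)) (g : PowerSeries k)
    (hg : constantCoeff (R := k) g = 0) (N : ℕ) :
    (X : PowerSeries k) ^ N ∣ PSEvalY F g - Sval F g N := by
  have hXg : (X : PowerSeries k) ∣ g := X_dvd_iff.mpr hg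
  rw [X_pow_dvd_iff]
  intro m hm
  rw [map_sub, sub_eq_zero]
  rw [PSEvalY, coeff_mk, Sval, map_sum]
  apply Finset.sum_subset (Finset.range_subset_range.mpr hm)
  intro n _ hn'
  have hmn : m < n := by simp only [Finset.mem_range, not_lt] at hn'; omega
  have : (X : PowerSeries k) ^ n ∣ PowerSeries.coeff (R := PowerSeries k) n F * g ^ n :=
    Dvd.dvd.mul_left (pow_dvd_pow_of_dvd hXg n) _
  exact X_pow_dvd_iff.mp this m hmn

lemma PSEvalY_add (F G : PowerSeries (PowerSeries k)) (g : PowerSeries k) :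
    PSEvalY (F + G) g = PSEvalY F g + PSEvalY G g := by
  ext m
  simp [PSEvalY, add_mul, Finset.sum_add_distrib]

lemma PSEvalY_C_mul (c : PowerSeries k) (F : PowerSeries (PowerSeries k)) (g : PowerSeries k)
    (hg : constantCoeff (R := k) g = 0) :
    PSEvalY (PowerSeries.C (R := PowerSeries k) c * F) g = c * PSEvalY F g := by
  apply eq_of_forall_X_pow_dvd
  intro N
  have h1 := X_pow_dvd_sub_Sval (PowerSeries.C (R := PowerSeries k) c * F) g hg N
  have h2 := X_pow_dvd_sub_Sval F g hg N
  have hS : Sval (PowerSeries.C (R := PowerSeries k) c * F) g N = c * Sval F g N := by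
    rw [Sval, Sval, Finset.mul_sum]
    exact Finset.sum_congr rfl fun n _ => by rw [coeff_C_mul, mul_assoc]
  have key : PSEvalY (PowerSeries.C (R := PowerSeries k) c * F) g - c * PSEvalY F g =
      (PSEvalY (PowerSeries.C (R := PowerSeries k) c * F) g -
        Sval (PowerSeries.C (R := PowerSeries k) c * F) g N) -
      c * (PSEvalY F g - Sval F g N) := by rw [hS]; ring
  rw [key]
  exact dvd_sub h1 (h2.mul_left c)

lemma PSEvalY_X_mul (F : PowerSeries (PowerSeries k)) (g : PowerSeries k)
    (hg : constantCoeff (R := k) g = 0) :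
    PSEvalY (PowerSeries.X * F) g = g * PSEvalY F g := by
  apply eq_of_forall_X_pow_dvd
  intro N
  have h1 := X_pow_dvd_sub_Sval (PowerSeries.X * F) g hg (N + 1)
  have h2 := X_pow_dvd_sub_Sval F g hg N
  have hS : Sval (PowerSeries.X * F) g (N + 1) = g * Sval F g N := by
    rw [Sval, Sval, Finset.sum_range_succ', Finset.mul_sum]
    simp only [coeff_zero_X_mul, zero_mul, add_zero, coeff_succ_X_mul]
    exact Finset.sum_congr rfl fun n _ => by ring
  have key : PSEvalY (PowerSeries.X * F) g - g * PSEvalY F g =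
      (PSEvalY (PowerSeries.X * F) g - Sval (PowerSeries.X * F) g (N + 1)) -
      g * (PSEvalY F g - Sval F g N) := by rw [hS]; ring
  rw [key]
  exact dvd_sub (dvd_trans (pow_dvd_pow _ (Nat.le_succ N)) h1) (h2.mul_left g)

lemma PSEvalY_C (c : PowerSeries k) (g : PowerSeries k) (hg : constantCoeff (R := k) g = 0) :
    PSEvalY (PowerSeries.C (R := PowerSeries k) c) g = c := by
  have := PSEvalY_C_mul c 1 g hg
  rw [mul_one] at this
  rw [this]
  have h1 : PSEvalY (1 : PowerSeries (PowerSeries k)) g = 1 := by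
    apply eq_of_forall_X_pow_dvd
    intro N
    have h := X_pow_dvd_sub_Sval (1 : PowerSeries (PowerSeries k)) g hg (N + 1)
    have hS : Sval (1 : PowerSeries (PowerSeries k)) g (N + 1) = 1 := by
      rw [Sval, Finset.sum_eq_single 0]
      · simp
      · intro n _ hn
        rw [show (1 : PowerSeries (PowerSeries k)) = PowerSeries.C (R := PowerSeries k) 1 from
          (map_one _).symm, coeff_C, if_neg hn]
        simp
      · simp
    rw [hS] at h
    exact dvd_trans (pow_dvd_pow _ (Nat.le_succ N)) h
  rw [h1, mul_one]

lemma PSEvalY_neg (F : PowerSeries (PowerSeries k)) (g : PowerSeries k) :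
    PSEvalY (-F) g = -PSEvalY F g := by
  ext m
  simp [PSEvalY, neg_mul, Finset.sum_neg_distrib]

lemma PSEvalY_sub (F G : PowerSeries (PowerSeries k)) (g : PowerSeries k) :
    PSEvalY (F - G) g = PSEvalY F g - PSEvalY G g := by
  rw [sub_eq_add_neg, PSEvalY_add, PSEvalY_neg, sub_eq_add_neg]

/-- Evaluation of `(Y - C c) * G`. -/
lemma PSEvalY_linear_mul (c : PowerSeries k) (G : PowerSeries (PowerSeries k))
    (g : PowerSeries k) (hg : constantCoeff (R := k) g = 0) :
    PSEvalY ((PowerSeries.X - PowerSeries.C (R := PowerSeries k) c) * G) g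
      = (g - c) * PSEvalY G g := by
  rw [sub_mul, PSEvalY_sub, PSEvalY_X_mul _ _ hg, PSEvalY_C_mul _ _ _ hg, sub_mul]

/-- The shift of `F` by `j` (dropping the first `j` coefficients). -/
noncomputable def shiftF (F : PowerSeries (PowerSeries k)) (j : ℕ) :
    PowerSeries (PowerSeries k) :=
  PowerSeries.mk fun n => PowerSeries.coeff (R := PowerSeries k) (n + j) F

lemma shiftF_zero (F : PowerSeries (PowerSeries k)) : shiftF F 0 = F := by
  ext n; simp [shiftF]

lemma shiftF_succ (F : PowerSeries (PowerSeries k)) (j : ℕ) :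
    shiftF F j = PowerSeries.C (R := PowerSeries k) (PowerSeries.coeff (R := PowerSeries k) j F)
      + PowerSeries.X * shiftF F (j + 1) := by
  ext n
  cases n with
  | zero => simp [shiftF]
  | succ n =>
    simp only [shiftF, coeff_mk, map_add, coeff_C, Nat.succ_ne_zero, if_neg,
      coeff_succ_X_mul]
    have : n + 1 + j = n + (j + 1) := by omega
    simp [this]

lemma PSEvalY_shiftF_rec (F : PowerSeries (PowerSeries k)) (g : PowerSeries k)
    (hg : constantCoeff (R := k) g = 0) (j : ℕ) :
    PSEvalY (shiftF F j) g = PowerSeries.coeff (R := PowerSeries k) j F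
      + g * PSEvalY (shiftF F (j + 1)) g := by
  conv_lhs => rw [shiftF_succ]
  rw [PSEvalY_add, PSEvalY_C _ _ hg, PSEvalY_X_mul _ _ hg]

/-- Single-root division: if `F(X, g(X)) = 0` then `Y - g ∣ F`. -/
lemma dvd_of_eval_eq_zero (F : PowerSeries (PowerSeries k)) (g : PowerSeries k)
    (hg : constantCoeff (R := k) g = 0) (hF : PSEvalY F g = 0) :
    ∃ G, F = (PowerSeries.X - PowerSeries.C (R := PowerSeries k) g) * G := by
  refine ⟨PowerSeries.mk fun j => PSEvalY (shiftF F (j + 1)) g, ?_⟩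
  refine PowerSeries.ext fun n => ?_
  rw [sub_mul, map_sub, coeff_C_mul, coeff_mk]
  cases n with
  | zero =>
    rw [coeff_zero_X_mul]
    have h0 := PSEvalY_shiftF_rec F g hg 0
    rw [shiftF_zero, hF] at h0
    linear_combination -h0
  | succ n =>
    rw [coeff_succ_X_mul, coeff_mk]
    have h := PSEvalY_shiftF_rec F g hg (n + 1)
    linear_combination -h

end PSaux

/-- If `F(X,Y) ∈ k[[X,Y]]` satisfies `F(X, g_b(X)) = 0` for pairwise distinct
`g_1, …, g_d ∈ X·k[[X]]`, then `∏ b, (Y - g_b(X))` divides `F` in `k[[X,Y]]`. -/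
theorem stmt0 {k : Type*} [Field k] (d : ℕ) (g : Fin d → PowerSeries k)
    (hg0 : ∀ b, PowerSeries.constantCoeff (R := k) (g b) = 0)
    (hginj : Function.Injective g)
    (F : PowerSeries (PowerSeries k)) (hF : ∀ b, PSEvalY F (g b) = 0) :
    ∃ G : PowerSeries (PowerSeries k),
      F = (∏ b : Fin d, (PowerSeries.X - PowerSeries.C (R := PowerSeries k) (g b))) * G := by
  induction d generalizing F with
  | zero => exact ⟨F, by simp⟩
  | succ d ih =>
    obtain ⟨G, hG⟩ := PSaux.dvd_of_eval_eq_zero F (g 0) (hg0 0) (hF 0)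
    have hGval : ∀ b : Fin d, PSEvalY G (g b.succ) = 0 := by
      intro b
      have h := hF b.succ
      rw [hG, PSaux.PSEvalY_linear_mul _ _ _ (hg0 b.succ)] at h
      have hne : g b.succ - g 0 ≠ 0 := by
        intro hcc
        exact (Fin.succ_ne_zero b) (hginj (by linear_combination (norm := module) hcc))
      exact (mul_eq_zero.mp h).resolve_left hne
    obtain ⟨H, hH⟩ := ih (fun b => g b.succ) (fun b => hg0 b.succ)
      (fun a b hab => Fin.succ_injective d (hginj hab)) G hGval
    refine ⟨H, ?_⟩
    rw [hG, hH, Fin.prod_univ_succ, mul_assoc]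
end

section
/- Let $k$ be a finite field, $d \geq 1$, and $g_1,\dots,g_d \in X\cdot k[[X]]$ pairwise distinct. Let $I = (X,Y)^d \subset k[[X,Y]]$. Then there exists $n \geq 0$ such that for every $f \in k[[X,Y]]$, if $f(X, g_b(X)) \in X^n k[[X]]$ for all $b = 1,\dots,d$, then $f \in I$. -/
set_option synthInstance.maxHeartbeats 1000000
set_option maxHeartbeats 1000000

open PowerSeries Finset

section Aux
variable {k : Type*} [CommRing k]

lemma coeff_mul_pow_eq_zero {g a : PowerSeries k} (hg : constantCoeff (R := k) g = 0)
    {j m : ℕ} (hjm : j < m) : coeff (R := k) j (a * g ^ m) = 0 := by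
  have hdvd : (X : PowerSeries k) ^ m ∣ a * g ^ m :=
    Dvd.dvd.mul_left (pow_dvd_pow_of_dvd (X_dvd_iff.mpr hg) m) a
  exact X_pow_dvd_iff.mp hdvd j hjm

lemma coeff_PSEvalY {F : PowerSeries (PowerSeries k)} {g : PowerSeries k}
    (hg : constantCoeff (R := k) g = 0) {m N : ℕ} (h : m < N) :
    coeff (R := k) m (PSEvalY F g) =
      coeff (R := k) m (∑ n ∈ Finset.range N, coeff (R := PowerSeries k) n F * g ^ n) := by
  rw [PSEvalY, coeff_mk, map_sum]
  refine Finset.sum_subset (Finset.range_subset_range.mpr h) ?_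
  intro n hn hn'
  exact coeff_mul_pow_eq_zero hg (by simp only [mem_range] at hn hn' ⊢; omega)

lemma coeff_mul_right_congr {g a b : PowerSeries k} {j : ℕ}
    (h : ∀ i ≤ j, coeff (R := k) i a = coeff (R := k) i b) :
    coeff (R := k) j (g * a) = coeff (R := k) j (g * b) := by
  rw [coeff_mul, coeff_mul]
  refine Finset.sum_congr rfl fun p hp => ?_
  rw [Finset.HasAntidiagonal.mem_antidiagonal] at hp
  rw [h p.2 (by omega)]

lemma PSEvalY_sub (F G : PowerSeries (PowerSeries k)) (g : PowerSeries k) :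
    PSEvalY (F - G) g = PSEvalY F g - PSEvalY G g := by
  ext m
  simp only [PSEvalY, coeff_mk, map_sub, sub_mul, map_sub, Finset.sum_sub_distrib]

lemma PSEvalY_C (h g : PowerSeries k) :
    PSEvalY (PowerSeries.C (R := PowerSeries k) h) g = h := by
  ext m
  rw [PSEvalY, coeff_mk]
  rw [Finset.sum_eq_single 0]
  · simp
  · intro n hn hn0
    simp [coeff_C, hn0]
  · simp

lemma PSEvalY_C_mul {g : PowerSeries k} (hg : constantCoeff (R := k) g = 0)
    (h : PowerSeries k) (q : PowerSeries (PowerSeries k)) :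
    PSEvalY (PowerSeries.C (R := PowerSeries k) h * q) g = h * PSEvalY q g := by
  ext m
  rw [coeff_PSEvalY hg (Nat.lt_succ_self m)]
  have : ∑ n ∈ Finset.range (m+1), coeff (R := PowerSeries k) n (PowerSeries.C (R := PowerSeries k) h * q) * g ^ n
      = h * ∑ n ∈ Finset.range (m+1), coeff (R := PowerSeries k) n q * g ^ n := by
    rw [Finset.mul_sum]
    refine Finset.sum_congr rfl fun n _ => ?_
    rw [coeff_C_mul, mul_assoc]
  rw [this]
  symm
  apply coeff_mul_right_congr
  intro i hi
  exact coeff_PSEvalY (N := m+1) hg (by omega)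

lemma PSEvalY_X_mul {g : PowerSeries k} (hg : constantCoeff (R := k) g = 0)
    (q : PowerSeries (PowerSeries k)) :
    PSEvalY (PowerSeries.X * q) g = g * PSEvalY q g := by
  ext m
  rw [coeff_PSEvalY hg (show m < m + 2 by omega)]
  have : ∑ n ∈ Finset.range (m+2), coeff (R := PowerSeries k) n (PowerSeries.X * q) * g ^ n
      = g * ∑ n ∈ Finset.range (m+1), coeff (R := PowerSeries k) n q * g ^ n := by
    rw [Finset.sum_range_succ' (fun n => coeff (R := PowerSeries k) n (PowerSeries.X * q) * g ^ n) (m+1)]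
    rw [coeff_zero_X_mul, zero_mul, add_zero, Finset.mul_sum]
    refine Finset.sum_congr rfl fun n _ => ?_
    rw [coeff_succ_X_mul, pow_succ]
    ring
  rw [this]
  symm
  apply coeff_mul_right_congr
  intro i hi
  exact coeff_PSEvalY (N := m+1) hg (by omega)

lemma coeff_zero_PSEvalY (F : PowerSeries (PowerSeries k)) (g : PowerSeries k) :
    coeff (R := k) 0 (PSEvalY F g) = coeff (R := k) 0 (coeff (R := PowerSeries k) 0 F) := by
  simp [PSEvalY]

end Aux

section Div
variable {k : Type*} [CommRing k]

lemma sum_shift (g : PowerSeries k) (F : ℕ → PowerSeries k) (c N : ℕ) :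
    ∑ m ∈ Finset.range (N+1), F (c + m) * g ^ m
      = F c + g * ∑ m ∈ Finset.range N, F (c + 1 + m) * g ^ m := by
  rw [Finset.sum_range_succ' (fun m => F (c + m) * g ^ m) N, Finset.mul_sum, add_comm]
  congr 1
  · simp
  · refine Finset.sum_congr rfl fun m _ => ?_
    have : c + (m + 1) = c + 1 + m := by omega
    rw [pow_succ, this]
    ring

/-- Division of `f ∈ k[[X]][[Y]]` by `Y - C g` with remainder `f(g)`. -/
lemma PSEvalY_division {g : PowerSeries k} (hg : constantCoeff (R := k) g = 0)
    (f : PowerSeries (PowerSeries k)) :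
    ∃ q : PowerSeries (PowerSeries k),
      f = (PowerSeries.X - PowerSeries.C (R := PowerSeries k) g) * q
        + PowerSeries.C (R := PowerSeries k) (PSEvalY f g) := by
  set A : ℕ → PowerSeries k := fun i => coeff (R := PowerSeries k) i f with hA
  set Q : ℕ → ℕ → PowerSeries k :=
    fun N n => ∑ m ∈ Finset.range N, A (n + 1 + m) * g ^ m with hQ
  set q : PowerSeries (PowerSeries k) :=
    PowerSeries.mk fun n => PowerSeries.mk fun j => coeff (R := k) j (Q (j+1) n) with hq
  have hQco : ∀ n j N, j < N → coeff (R := k) j (Q N n) = coeff (R := k) j (Q (j+1) n) := by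
    intro n j N hN
    rw [hQ]
    simp only [map_sum]
    exact (Finset.sum_subset (Finset.range_subset_range.mpr hN)
      (fun m hm hm' => coeff_mul_pow_eq_zero hg
        (by simp only [Finset.mem_range] at hm hm' ⊢; omega))).symm
  have hqco : ∀ n j N, j < N →
      coeff (R := k) j (coeff (R := PowerSeries k) n q) = coeff (R := k) j (Q N n) := by
    intro n j N hN
    rw [hq, coeff_mk, coeff_mk, hQco n j N hN]
  have key : PowerSeries.X * q
      = f + PowerSeries.C (R := PowerSeries k) g * q
        - PowerSeries.C (R := PowerSeries k) (PSEvalY f g) := by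
    ext nn j
    rcases nn with _ | n
    · rw [coeff_zero_X_mul]
      simp only [map_zero, map_sub, map_add, coeff_C_mul, coeff_zero_C]
      have hev : coeff (R := k) j (PSEvalY f g) = coeff (R := k) j (A 0 + g * Q (j+1) 0) := by
        rw [coeff_PSEvalY (N := j + 2) hg (by omega)]
        have := sum_shift g A 0 (j+1)
        simp only [Nat.zero_add] at this
        rw [show (∑ n ∈ Finset.range (j+2), coeff (R := PowerSeries k) n f * g ^ n)
            = ∑ m ∈ Finset.range (j+1+1), A (0 + m) * g ^ m by
          refine Finset.sum_congr rfl fun m _ => by simp [hA]]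
        rw [sum_shift g A 0 (j+1)]
      have hgq : coeff (R := k) j (g * coeff (R := PowerSeries k) 0 q) = coeff (R := k) j (g * Q (j+1) 0) :=
        coeff_mul_right_congr fun i hi => hqco 0 i (j+1) (by omega)
      rw [hev, hgq, map_add]
      ring
    · rw [coeff_succ_X_mul]
      simp only [map_sub, map_add, coeff_C_mul, coeff_C, Nat.succ_ne_zero, if_false, sub_zero,
        map_zero]
      have h1 : coeff (R := k) j (coeff (R := PowerSeries k) n q) = coeff (R := k) j (Q (j+2) n) :=
        hqco n j (j+2) (by omega)
      have h2 : Q (j+2) n = A (n+1) + g * Q (j+1) (n+1) := by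
        have := sum_shift g A (n+1) (j+1)
        rw [hQ]
        simp only
        rw [show (∑ m ∈ Finset.range (j+2), A (n + 1 + m) * g ^ m)
            = ∑ m ∈ Finset.range (j+1+1), A (n + 1 + m) * g ^ m from rfl, this]
      have h3 : coeff (R := k) j (g * coeff (R := PowerSeries k) (n+1) q)
          = coeff (R := k) j (g * Q (j+1) (n+1)) :=
        coeff_mul_right_congr fun i hi => hqco (n+1) i (j+1) (by omega)
      rw [h1, h2, h3, map_add]
  exact ⟨q, by linear_combination -key⟩

end Div

section Main
variable {k : Type*} [CommRing k]

lemma PSEvalY_add (F G : PowerSeries (PowerSeries k)) (g : PowerSeries k) :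
    PSEvalY (F + G) g = PSEvalY F g + PSEvalY G g := by
  ext m
  simp only [PSEvalY, coeff_mk, map_add, add_mul, Finset.sum_add_distrib]

end Main

section Fld
variable {k : Type*} [Field k]

lemma exists_X_pow_mul_unit {φ : PowerSeries k} (hφ : φ ≠ 0) :
    ∃ (e : ℕ) (u : PowerSeries k), IsUnit u ∧ φ = PowerSeries.X ^ e * u := by
  classical
  have hex : ∃ n, coeff (R := k) n φ ≠ 0 := by
    by_contra h
    push_neg at h
    exact hφ (PowerSeries.ext fun n => by simp [h n])
  obtain ⟨N, h1, hne⟩ : ∃ N, (∀ i < N, coeff (R := k) i φ = 0) ∧ coeff (R := k) N φ ≠ 0 :=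
    ⟨Nat.find hex, fun i hi => by simpa using Nat.find_min hex hi, Nat.find_spec hex⟩
  obtain ⟨u, hu⟩ := X_pow_dvd_iff.mpr h1
  refine ⟨N, u, ?_, hu⟩
  rw [isUnit_iff_constantCoeff, isUnit_iff_ne_zero]
  have h2 : coeff (R := k) (0 + N) (PowerSeries.X ^ N * u) = coeff (R := k) 0 u :=
    coeff_X_pow_mul u N 0
  rw [zero_add] at h2
  rw [hu, h2] at hne
  rwa [coeff_zero_eq_constantCoeff] at hne

lemma key_lemma (d' : ℕ) :
    ∀ (g : Fin (d' + 1) → PowerSeries k),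
      (∀ b, constantCoeff (R := k) (g b) = 0) → Function.Injective g →
      ∃ n : ℕ, ∀ f : PowerSeries (PowerSeries k),
        (∀ b, ∃ h, PSEvalY f (g b) = PowerSeries.X ^ n * h) →
        f ∈ (Ideal.span {PowerSeries.C (R := PowerSeries k) PowerSeries.X,
          (PowerSeries.X : PowerSeries (PowerSeries k))}) ^ (d' + 1) := by
  induction d' with
  | zero =>
    intro g hg0 _
    refine ⟨1, fun f hf => ?_⟩
    rw [pow_one]
    obtain ⟨h, hh⟩ := hf 0
    have hc : constantCoeff (R := k) (coeff (R := PowerSeries k) 0 f) = 0 := by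
      have h0 := congrArg (coeff (R := k) 0) hh
      rw [coeff_zero_PSEvalY, pow_one, coeff_zero_X_mul] at h0
      rwa [coeff_zero_eq_constantCoeff] at h0
    obtain ⟨w, hw⟩ := X_dvd_iff.mpr hc
    have hf0 := eq_shift_mul_X_add_const f
    rw [hf0]
    refine Ideal.add_mem _ (Ideal.mul_mem_left _ _ (Ideal.subset_span (by simp))) ?_
    have hcf : constantCoeff (R := PowerSeries k) f = PowerSeries.X * w := by
      rw [← coeff_zero_eq_constantCoeff]; exact hw
    rw [hcf, map_mul]
    exact Ideal.mul_mem_right _ _ (Ideal.subset_span (by simp))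
  | succ d ih =>
    intro g hg0 hginj
    set g' : Fin (d + 1) → PowerSeries k := fun b => g b.castSucc with hg'
    obtain ⟨n', hn'⟩ := ih g' (fun b => hg0 _)
      (fun a b hab => Fin.castSucc_injective _ (hginj hab))
    have hne : ∀ b : Fin (d + 1), g b.castSucc - g (Fin.last (d + 1)) ≠ 0 := by
      intro b
      refine sub_ne_zero.mpr fun h => ?_
      exact absurd (hginj h) (Fin.ne_of_lt (Fin.castSucc_lt_last b))
    choose e u hu hdecomp using fun b => exists_X_pow_mul_unit (hne b)
    set E := ∑ b, e b with hE
    have heE : ∀ b, e b ≤ E :=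
      fun b => Finset.single_le_sum (fun _ _ => Nat.zero_le _) (Finset.mem_univ b)
    refine ⟨n' + E + (d + 2), fun f hf => ?_⟩
    obtain ⟨q, hq⟩ := PSEvalY_division (hg0 (Fin.last (d + 1))) f
    set r := PSEvalY f (g (Fin.last (d + 1))) with hr
    have heval : ∀ b : Fin (d + 1),
        PSEvalY f (g b.castSucc)
          = (g b.castSucc - g (Fin.last (d + 1))) * PSEvalY q (g b.castSucc) + r := by
      intro b
      conv_lhs => rw [hq]
      rw [show (PowerSeries.X - PowerSeries.C (R := PowerSeries k) (g (Fin.last (d + 1)))) * q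
          = PowerSeries.X * q
            - PowerSeries.C (R := PowerSeries k) (g (Fin.last (d + 1))) * q by ring]
      rw [PSEvalY_add, PSEvalY_sub, PSEvalY_X_mul (hg0 b.castSucc),
        PSEvalY_C_mul (hg0 b.castSucc), PSEvalY_C]
      ring
    have hq' : ∀ b : Fin (d + 1), ∃ h, PSEvalY q (g' b) = PowerSeries.X ^ n' * h := by
      intro b
      obtain ⟨hb, hhb⟩ := hf b.castSucc
      obtain ⟨hl, hhl⟩ := hf (Fin.last (d + 1))
      have hmain : (g b.castSucc - g (Fin.last (d + 1))) * PSEvalY q (g b.castSucc)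
          = PowerSeries.X ^ (n' + E + (d + 2)) * (hb - hl) := by
        have h5 := heval b
        rw [hhb] at h5
        rw [← hr] at hhl
        rw [hhl] at h5
        linear_combination -h5
      rw [hdecomp b] at hmain
      obtain ⟨m, hm⟩ : ∃ m, n' + E + (d + 2) = e b + (n' + m) :=
        ⟨E - e b + (d + 2), by have := heE b; omega⟩
      obtain ⟨v, hv⟩ := (hu b).exists_left_inv
      have hcan : u b * PSEvalY q (g b.castSucc) = PowerSeries.X ^ (n' + m) * (hb - hl) := by
        apply mul_left_cancel₀ (pow_ne_zero (e b) (X_ne_zero : (PowerSeries.X : PowerSeries k) ≠ 0))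
        rw [← mul_assoc, hmain, hm, pow_add, mul_assoc]
      refine ⟨PowerSeries.X ^ m * (v * (hb - hl)), ?_⟩
      have hfin : PSEvalY q (g b.castSucc) = v * (PowerSeries.X ^ (n' + m) * (hb - hl)) := by
        calc PSEvalY q (g b.castSucc)
            = (v * u b) * PSEvalY q (g b.castSucc) := by rw [hv, one_mul]
          _ = v * (u b * PSEvalY q (g b.castSucc)) := by ring
          _ = v * (PowerSeries.X ^ (n' + m) * (hb - hl)) := by rw [hcan]
      rw [hg']
      simp only
      rw [hfin, pow_add]
      ring
    have hqmem := hn' q hq'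
    set I := Ideal.span {PowerSeries.C (R := PowerSeries k) PowerSeries.X,
      (PowerSeries.X : PowerSeries (PowerSeries k))} with hI
    have hYmem : (PowerSeries.X : PowerSeries (PowerSeries k)) ∈ I :=
      Ideal.subset_span (by simp)
    have hCXmem : PowerSeries.C (R := PowerSeries k) (PowerSeries.X : PowerSeries k) ∈ I :=
      Ideal.subset_span (by simp)
    have hCmem : ∀ w : PowerSeries k, constantCoeff (R := k) w = 0 →
        PowerSeries.C (R := PowerSeries k) w ∈ I := by
      intro w hw
      obtain ⟨w', hw'⟩ := X_dvd_iff.mpr hw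
      rw [hw', map_mul]
      exact Ideal.mul_mem_right _ _ hCXmem
    rw [hq]
    refine Ideal.add_mem _ ?_ ?_
    · rw [pow_succ']
      exact Ideal.mul_mem_mul (sub_mem hYmem (hCmem _ (hg0 _))) hqmem
    · obtain ⟨hl, hhl⟩ := hf (Fin.last (d + 1))
      rw [← hr] at hhl
      rw [hhl, map_mul, map_pow]
      refine Ideal.mul_mem_right _ _ ?_
      exact Ideal.pow_le_pow_right (by omega) (Ideal.pow_mem_pow hCXmem _)

end Fld


/-- For a finite field `k`, `d ≥ 1` and pairwise distinct `g_1, …, g_d ∈ X·k[[X]]`,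
with `I = (X,Y)^d ⊆ k[[X,Y]]`, there is an `n` such that any `f ∈ k[[X,Y]]` with
`f(X, g_b(X)) ∈ X^n k[[X]]` for all `b` lies in `I`. -/
theorem stmt2 {k : Type*} [Field k] [Fintype k] (d : ℕ) (hd : 1 ≤ d)
    (g : Fin d → PowerSeries k)
    (hg0 : ∀ b, PowerSeries.constantCoeff (R := k) (g b) = 0)
    (hginj : Function.Injective g) :
    ∃ n : ℕ, ∀ f : PowerSeries (PowerSeries k),
      (∀ b : Fin d, ∃ h : PowerSeries k, PSEvalY f (g b) = PowerSeries.X ^ n * h) →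
      f ∈ (Ideal.span {PowerSeries.C (R := PowerSeries k) PowerSeries.X,
        (PowerSeries.X : PowerSeries (PowerSeries k))}) ^ d := by
  obtain ⟨d', rfl⟩ : ∃ d', d = d' + 1 := ⟨d - 1, by omega⟩
  exact key_lemma d' g hg0 hginj
end

section
/- Let $F$ be a finite extension of $\mathbf{Q}_p$ with ring of integers $o_F$, residue field of cardinality $q$, uniformizer $\pi$, and let $\operatorname{LT}$ be the Lubin--Tate formal group with $[\pi](X) = \pi X + X^q$. Define $\psi$ on $o_F[[X]]$ by $\phi(\psi(f)) = \frac{1}{\pi}\operatorname{Tr}_{o_F[[X]]/\phi(o_F[[X]])}(f)$ where $\phi(f)(X) = f([\pi](X))$. Then $\psi(1) = q/\pi$, $\psi(X^i) = 0$ for $1 \leq i \leq q-2$, $\psi(X^{q-1}) = 1-q$, and $\psi(X^i) = X\cdot\psi(X^{i-q}) - \pi\cdot\psi(X^{i-q+1})$ for $i \geq q$. -/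
open PowerSeries

/-- Composition `f(g(X))` of formal power series (valid when `g` has zero constant term):
the coefficient of `X^m` in `∑ n, f_n g(X)^n` only involves `n ≤ m`. -/
noncomputable def PSComp {R : Type*} [CommRing R] (f g : PowerSeries R) : PowerSeries R :=
  PowerSeries.mk fun m => ∑ n ∈ Finset.range (m + 1),
    PowerSeries.coeff m (PowerSeries.C (PowerSeries.coeff n f) * g ^ n)

namespace PsAux
open Finset

variable {R : Type*} [CommRing R]

theorem coeff_PSComp (f g : R⟦X⟧) (m : ℕ) :
    coeff m (PSComp f g) = ∑ n ∈ range (m+1), coeff m (C (coeff n f) * g ^ n) :=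
  coeff_mk _ _

theorem coeff_term_zero {g : R⟦X⟧} (hg : constantCoeff g = 0)
    {m n : ℕ} (h : m < n) (c : R) : coeff m (C c * g ^ n) = 0 := by
  have hXg : (X : R⟦X⟧) ∣ g := X_dvd_iff.mpr hg
  have h2 : (X : R⟦X⟧) ^ n ∣ g ^ n := pow_dvd_pow_of_dvd hXg n
  rw [coeff_C_mul, X_pow_dvd_iff.mp h2 m h, mul_zero]

theorem coeff_PSComp_eq {g : R⟦X⟧} (hg : constantCoeff g = 0) (f : R⟦X⟧) {m N : ℕ}
    (h : m < N) :
    coeff m (PSComp f g) = coeff m (∑ n ∈ range N, C (coeff n f) * g ^ n) := by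
  rw [coeff_PSComp, map_sum]
  refine Finset.sum_subset (Finset.range_subset_range.mpr h) ?_
  intro x _ hx
  exact coeff_term_zero hg (by simpa using hx) _

theorem PSComp_one (g : R⟦X⟧) : PSComp (1 : R⟦X⟧) g = 1 := by
  ext m
  rw [coeff_PSComp]
  rw [Finset.sum_eq_single_of_mem 0 (Finset.mem_range.mpr (Nat.succ_pos m))]
  · simp
  · intro n _ hn
    simp [coeff_one, hn]

theorem PSComp_add (f₁ f₂ g : R⟦X⟧) : PSComp (f₁ + f₂) g = PSComp f₁ g + PSComp f₂ g := by
  ext m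
  simp only [coeff_PSComp, map_add, ← Finset.sum_add_distrib]
  refine Finset.sum_congr rfl fun n _ => ?_
  rw [add_mul, map_add]

theorem PSComp_Cmul (a : R) (f g : R⟦X⟧) : PSComp (C a * f) g = C a * PSComp f g := by
  ext m
  rw [coeff_PSComp, coeff_C_mul, coeff_PSComp, Finset.mul_sum]
  refine Finset.sum_congr rfl fun n _ => ?_
  rw [coeff_C_mul, coeff_C_mul, coeff_C_mul, mul_assoc]

theorem PSComp_zero (g : R⟦X⟧) : PSComp (0 : R⟦X⟧) g = 0 := by
  have := PSComp_Cmul (0 : R) 0 g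
  simpa using this

theorem PSComp_C (a : R) (g : R⟦X⟧) : PSComp (C a) g = C a := by
  have := PSComp_Cmul a 1 g
  rw [mul_one, PSComp_one, mul_one] at this
  exact this

theorem PSComp_sub (f₁ f₂ g : R⟦X⟧) : PSComp (f₁ - f₂) g = PSComp f₁ g - PSComp f₂ g := by
  have h1 := PSComp_add (f₁ - f₂) f₂ g
  rw [sub_add_cancel] at h1
  rw [h1]; ring

theorem PSComp_X {g : R⟦X⟧} (hg : constantCoeff g = 0) : PSComp X g = g := by
  ext m
  rw [coeff_PSComp]
  cases m with
  | zero =>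
    simp [coeff_zero_eq_constantCoeff, hg]
  | succ m =>
    rw [Finset.sum_eq_single_of_mem 1 (Finset.mem_range.mpr (by omega))]
    · simp
    · intro n _ hn
      simp [coeff_X, hn]

theorem coeff_mul_congr {A B g : R⟦X⟧} {m : ℕ} (h : ∀ l ≤ m, coeff l A = coeff l B) :
    coeff m (g * A) = coeff m (g * B) := by
  rw [coeff_mul, coeff_mul]
  refine Finset.sum_congr rfl fun p hp => ?_
  rw [h p.2 (by have := Finset.HasAntidiagonal.mem_antidiagonal.mp hp; omega)]

theorem PSComp_Xmul {g : R⟦X⟧} (hg : constantCoeff g = 0) (f : R⟦X⟧) :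
    PSComp (X * f) g = g * PSComp f g := by
  ext m
  rw [coeff_PSComp_eq hg (X * f) (Nat.lt_succ_of_lt (Nat.lt_succ_self m))]
  rw [Finset.sum_range_succ']
  have h0 : coeff 0 (X * f) = 0 := by
    rw [coeff_zero_eq_constantCoeff, map_mul, constantCoeff_X, zero_mul]
  rw [h0, map_zero, pow_zero, zero_mul, add_zero]
  have hre : ∀ n ∈ range (m+1), C (coeff (n+1) (X * f)) * g ^ (n+1)
      = g * (C (coeff n f) * g ^ n) := by
    intro n _
    rw [coeff_succ_X_mul, pow_succ]
    ring
  rw [Finset.sum_congr rfl hre, ← Finset.mul_sum]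
  exact coeff_mul_congr (fun l hl => (coeff_PSComp_eq hg f (Nat.lt_succ_of_le hl)).symm)

noncomputable def uu (π : R) (q : ℕ) : R⟦X⟧ := C π * X + X ^ q

theorem constantCoeff_uu (π : R) {q : ℕ} (hq2 : 2 ≤ q) : constantCoeff (uu π q) = 0 := by
  simp [uu, zero_pow (by omega : q ≠ 0)]

theorem uu_pow_eq (π : R) (q n : ℕ) :
    (uu π q) ^ n = ∑ k ∈ range (n+1), C (π^k * (n.choose k : R)) * X ^ (k + q*(n-k)) := by
  rw [uu, add_pow]
  refine Finset.sum_congr rfl fun k _ => ?_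
  have hC : (C) (π^k * (n.choose k : R)) = (C π)^k * ((n.choose k : ℕ) : R⟦X⟧) := by
    rw [map_mul, map_pow, map_natCast]
  rw [hC, mul_pow, ← pow_mul, pow_add]
  ring

theorem coeff_uu_pow (π : R) (q n r : ℕ) :
    coeff r ((uu π q)^n)
      = ∑ k ∈ range (n+1), π^k * (n.choose k : R) * (if r = k + q*(n-k) then 1 else 0) := by
  rw [uu_pow_eq, map_sum]
  refine Finset.sum_congr rfl fun k _ => ?_
  rw [coeff_C_mul, coeff_X_pow]

theorem coeff_uu_pow_self (π : R) {q : ℕ} (hq2 : 2 ≤ q) (n : ℕ) :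
    coeff (q*n) ((uu π q)^n) = 1 := by
  rw [coeff_uu_pow]
  rw [Finset.sum_eq_single_of_mem 0 (Finset.mem_range.mpr (Nat.succ_pos n))]
  · simp
  · intro k hk hk0
    have hkn : k ≤ n := by simpa using Nat.lt_succ_iff.mp (Finset.mem_range.mp hk)
    rw [if_neg, mul_zero]
    intro heq
    have h1 : q*n = q*k + q*(n-k) := by
      rw [← Nat.mul_add, Nat.add_sub_cancel' hkn]
    have h2 : k = q * k := by omega
    have h3 : 1 * k = q * k := by rw [one_mul]; exact h2
    have := Nat.eq_of_mul_eq_mul_right (Nat.pos_of_ne_zero hk0) h3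
    omega

theorem dvd_coeff_uu_pow (π : R) {q : ℕ} (hq2 : 2 ≤ q) {n r : ℕ} (hr : r ≠ q*n) :
    π ∣ coeff r ((uu π q)^n) := by
  rw [coeff_uu_pow]
  refine Finset.dvd_sum fun k hk => ?_
  by_cases hcase : r = k + q*(n-k)
  · have hkn : k ≤ n := Nat.lt_succ_iff.mp (Finset.mem_range.mp hk)
    have hk0 : k ≠ 0 := by
      intro h0
      apply hr
      rw [hcase, h0]
      simp
    rw [if_pos hcase, mul_one]
    exact dvd_mul_of_dvd_left (dvd_pow_self π hk0) _
  · rw [if_neg hcase, mul_zero]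
    exact dvd_zero _

theorem dvd_diag (π : R) {q : ℕ} (hq2 : 2 ≤ q) (h : R⟦X⟧) {i i' : ℕ}
    (hi : i < q) (hi' : i' < q) (n : ℕ) :
    π ∣ coeff (i + q*n) (X^i' * PSComp h (uu π q))
        - (if i' = i then coeff n h else 0) := by
  have hu0 := constantCoeff_uu π hq2
  rw [coeff_X_pow_mul']
  by_cases hle : i' ≤ i + q*n
  · rw [if_pos hle]
    set r := i + q*n - i' with hr
    have hco : coeff r (PSComp h (uu π q))
        = ∑ n' ∈ range (r+1), coeff n' h * coeff r ((uu π q)^n') := by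
      rw [coeff_PSComp]
      exact Finset.sum_congr rfl fun n' _ => coeff_C_mul _ _ _
    rw [hco]
    by_cases hii : i' = i
    · rw [if_pos hii]
      have hrq : r = q * n := by omega
      have hnmem : n ∈ range (r+1) := by
        have : n ≤ q * n := Nat.le_mul_of_pos_left n (by omega)
        exact Finset.mem_range.mpr (by omega)
      rw [← Finset.add_sum_erase _ _ hnmem, hrq, coeff_uu_pow_self π hq2, mul_one,
        add_sub_cancel_left]
      refine Finset.dvd_sum fun n' hn' => ?_
      have hne : n' ≠ n := (Finset.mem_erase.mp hn').1
      have : q * n ≠ q * n' := fun hc => hne (Nat.eq_of_mul_eq_mul_left (by omega) hc).symm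
      exact Dvd.dvd.mul_left (dvd_coeff_uu_pow π hq2 (by omega)) _
    · rw [if_neg hii, sub_zero]
      refine Finset.dvd_sum fun n' _ => ?_
      have hrne : r ≠ q * n' := by
        intro hc
        have heq2 : i + q*n = i' + q*n' := by omega
        have hmod : (i + q*n) % q = (i' + q*n') % q := by rw [heq2]
        rw [Nat.add_mul_mod_self_left, Nat.add_mul_mod_self_left,
          Nat.mod_eq_of_lt hi, Nat.mod_eq_of_lt hi'] at hmod
        exact hii hmod.symm
      exact Dvd.dvd.mul_left (dvd_coeff_uu_pow π hq2 hrne) _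
  · rw [if_neg hle, if_neg (by omega : ¬ i' = i), sub_zero]
    exact dvd_zero _

theorem pow_dvd_of_rel [IsDomain R] {π : R} (hπ0 : π ≠ 0) {q : ℕ} (hq2 : 2 ≤ q) :
    ∀ (t : ℕ) (h : Fin q → R⟦X⟧),
      (∑ i : Fin q, X^(i:ℕ) * PSComp (h i) (uu π q)) = 0 →
      ∀ (i : Fin q) (n : ℕ), π^t ∣ coeff n (h i) := by
  intro t
  induction t with
  | zero => intro h _ i n; simpa using dvd_refl (1:R) |>.trans (one_dvd _)
  | succ t ih =>
    intro h hsum i n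
    have hd : ∀ (i : Fin q) (n : ℕ), π ∣ coeff n (h i) := by
      intro i n
      have hzero : (∑ i' : Fin q, coeff ((i:ℕ) + q*n) (X^(i':ℕ) * PSComp (h i') (uu π q))) = 0 := by
        rw [← map_sum, hsum, map_zero]
      have hsumite : (∑ i' : Fin q, (if (i':ℕ) = (i:ℕ) then coeff n (h i') else 0))
          = coeff n (h i) := by
        have : ∀ i' : Fin q, (if (i':ℕ) = (i:ℕ) then coeff n (h i') else 0)
            = (if i' = i then coeff n (h i') else 0) := by
          intro i'; simp [Fin.val_eq_val]
        rw [Finset.sum_congr rfl fun i' _ => this i', Finset.sum_ite_eq' univ i]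
        simp
      have key : π ∣ (∑ i' : Fin q, coeff ((i:ℕ) + q*n) (X^(i':ℕ) * PSComp (h i') (uu π q)))
          - coeff n (h i) := by
        rw [← hsumite, ← Finset.sum_sub_distrib]
        exact Finset.dvd_sum fun i' _ => dvd_diag π hq2 (h i') i.isLt i'.isLt n
      rw [hzero, zero_sub] at key
      exact (dvd_neg).mp key
    set h' : Fin q → R⟦X⟧ := fun i => PowerSeries.mk fun n => (hd i n).choose with hh'
    have hh : ∀ i, h i = C π * h' i := by
      intro i; ext n
      rw [coeff_C_mul, hh', coeff_mk]
      exact (hd i n).choose_spec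
    have hCne : (C π) ≠ 0 := fun hc => hπ0 (by simpa using congrArg (constantCoeff) hc)
    have hsum' : (∑ i : Fin q, X^(i:ℕ) * PSComp (h' i) (uu π q)) = 0 := by
      have hC : (C π) * ∑ i : Fin q, X^(i:ℕ) * PSComp (h' i) (uu π q) = 0 := by
        rw [Finset.mul_sum, ← hsum]
        refine Finset.sum_congr rfl fun j _ => ?_
        rw [hh j, PSComp_Cmul]; ring
      exact (mul_eq_zero.mp hC).resolve_left hCne
    have ht := ih h' hsum' i n
    rw [hh i, coeff_C_mul, pow_succ']
    exact mul_dvd_mul_left π ht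

theorem decomp_unique [IsDomain R] {π : R} (hπ0 : π ≠ 0) {q : ℕ} (hq2 : 2 ≤ q)
    (hKrull : ∀ r : R, (∀ t, π^t ∣ r) → r = 0)
    {g h : Fin q → R⟦X⟧}
    (heq : (∑ i : Fin q, X^(i:ℕ) * PSComp (g i) (uu π q))
         = ∑ i : Fin q, X^(i:ℕ) * PSComp (h i) (uu π q)) :
    g = h := by
  have hrel : (∑ i : Fin q, X^(i:ℕ) * PSComp (g i - h i) (uu π q)) = 0 := by
    have hterm : ∀ i : Fin q, X^(i:ℕ) * PSComp (g i - h i) (uu π q)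
        = X^(i:ℕ) * PSComp (g i) (uu π q) - X^(i:ℕ) * PSComp (h i) (uu π q) := by
      intro i; rw [PSComp_sub]; ring
    rw [Finset.sum_congr rfl fun i _ => hterm i, Finset.sum_sub_distrib, heq, sub_self]
  funext i
  ext n
  have hall : ∀ t, π^t ∣ coeff n (g i - h i) := fun t =>
    pow_dvd_of_rel hπ0 hq2 t _ hrel i n
  have h0 := hKrull _ hall
  rw [map_sub] at h0
  exact sub_eq_zero.mp h0


theorem psi_formulas {R : Type*} [CommRing R] [IsDomain R] {π : R} (hπ0 : π ≠ 0)
    {q : ℕ} (hq2 : 2 ≤ q) (hKrull : ∀ r : R, (∀ t, π^t ∣ r) → r = 0)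
    (D : R⟦X⟧ → Fin q → R⟦X⟧)
    (hD : ∀ f : R⟦X⟧, f = ∑ i : Fin q, X^(i:ℕ) * PSComp (D f i) (uu π q))
    (ψ : R⟦X⟧ → R⟦X⟧)
    (hψ : ∀ f : R⟦X⟧, C π * ψ f = ∑ i : Fin q, D (X^(i:ℕ) * f) i) :
    C π * ψ 1 = C ((q : ℕ) : R) ∧
    (∀ i : ℕ, 1 ≤ i → i ≤ q - 2 → ψ (X ^ i) = 0) ∧
    ψ (X ^ (q - 1)) = C (1 - ((q : ℕ) : R)) ∧
    (∀ i : ℕ, q ≤ i → ψ (X ^ i) =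
      X * ψ (X ^ (i - q)) - C π * ψ (X ^ (i - q + 1))) := by
  have hCne : (C π) ≠ 0 := fun hc => hπ0 (by simpa using congrArg (constantCoeff) hc)
  have huu : PsAux.uu π q = C π * X + X ^ q := rfl
  have hu0 : constantCoeff (uu π q) = 0 := constantCoeff_uu π hq2
  have hDspec : ∀ (f : R⟦X⟧) (c : Fin q → R⟦X⟧),
      (f = ∑ j : Fin q, X^(j:ℕ) * PSComp (c j) (uu π q)) → D f = c := by
    intro f c hfc
    exact decomp_unique hπ0 hq2 hKrull ((hD f).symm.trans hfc)
  -- decomposition of monomials X^t, t < q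
  have hmono : ∀ (t : ℕ) (ht : t < q),
      D (X^t : R⟦X⟧) = fun j => if j = (⟨t, ht⟩ : Fin q) then 1 else 0 := by
    intro t ht
    apply hDspec
    have hterm : ∀ j : Fin q, X^(j:ℕ) * PSComp (if j = (⟨t, ht⟩ : Fin q) then 1 else 0) (uu π q)
        = if j = (⟨t, ht⟩ : Fin q) then X^(j:ℕ) else 0 := by
      intro j
      by_cases hj : j = (⟨t, ht⟩ : Fin q)
      · rw [if_pos hj, if_pos hj, PSComp_one, mul_one]
      · rw [if_neg hj, if_neg hj, PSComp_zero, mul_zero]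
    rw [Finset.sum_congr rfl fun j _ => hterm j, Finset.sum_ite_eq' Finset.univ _ (fun j : Fin q => X^(j:ℕ))]
    simp
  -- decomposition of X^(q+r), r+1 < q
  have hmono2 : ∀ (r : ℕ) (hr : r + 1 < q),
      D (X^(q+r) : R⟦X⟧) = fun j =>
        (if j = (⟨r, by omega⟩ : Fin q) then X else 0)
          - (if j = (⟨r+1, hr⟩ : Fin q) then C π else 0) := by
    intro r hr
    apply hDspec
    have hterm : ∀ j : Fin q, X^(j:ℕ) * PSComp
        ((if j = (⟨r, by omega⟩ : Fin q) then X else 0)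
          - (if j = (⟨r+1, hr⟩ : Fin q) then C π else 0)) (uu π q)
        = (if j = (⟨r, by omega⟩ : Fin q) then X^(j:ℕ) * uu π q else 0)
          - (if j = (⟨r+1, hr⟩ : Fin q) then X^(j:ℕ) * C π else 0) := by
      intro j
      rw [PSComp_sub, mul_sub]
      congr 1
      · by_cases hj : j = (⟨r, by omega⟩ : Fin q)
        · rw [if_pos hj, if_pos hj, PSComp_X hu0]
        · rw [if_neg hj, if_neg hj, PSComp_zero, mul_zero]
      · by_cases hj : j = (⟨r+1, hr⟩ : Fin q)
        · rw [if_pos hj, if_pos hj, PSComp_C]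
        · rw [if_neg hj, if_neg hj, PSComp_zero, mul_zero]
    rw [Finset.sum_congr rfl fun j _ => hterm j, Finset.sum_sub_distrib,
      Finset.sum_ite_eq' Finset.univ _ (fun j : Fin q => X^(j:ℕ) * uu π q),
      Finset.sum_ite_eq' Finset.univ _ (fun j : Fin q => X^(j:ℕ) * C π)]
    simp only [Finset.mem_univ, if_pos]
    rw [huu]
    ring
  -- recurrence for D
  have hrec : ∀ s : ℕ, D (X^(s+q) : R⟦X⟧)
      = fun k => X * D (X^s : R⟦X⟧) k - C π * D (X^(s+1) : R⟦X⟧) k := by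
    intro s
    apply hDspec
    have hterm : ∀ k : Fin q,
        X^(k:ℕ) * PSComp (X * D (X^s : R⟦X⟧) k - C π * D (X^(s+1) : R⟦X⟧) k) (uu π q)
        = uu π q * (X^(k:ℕ) * PSComp (D (X^s : R⟦X⟧) k) (uu π q))
          - C π * (X^(k:ℕ) * PSComp (D (X^(s+1) : R⟦X⟧) k) (uu π q)) := by
      intro k
      rw [PSComp_sub, PSComp_Xmul hu0, PSComp_Cmul]
      ring
    rw [Finset.sum_congr rfl fun k _ => hterm k, Finset.sum_sub_distrib,
      ← Finset.mul_sum, ← Finset.mul_sum, ← hD (X^s : R⟦X⟧), ← hD (X^(s+1) : R⟦X⟧), huu]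
    ring
  refine ⟨?_, ?_, ?_, ?_⟩
  · -- ψ(1)
    have hterm : ∀ i : Fin q, D (X^(i:ℕ) * 1) i = 1 := by
      intro i
      rw [mul_one, hmono (i:ℕ) i.isLt]
      simp
    rw [hψ 1, Finset.sum_congr rfl fun i _ => hterm i]
    simp [Finset.card_univ]
  · -- ψ(X^j) = 0, 1 ≤ j ≤ q-2
    intro j hj1 hj2
    have hc : C π * ψ (X^j : R⟦X⟧) = C π * 0 := by
      rw [hψ, mul_zero]
      apply Finset.sum_eq_zero
      intro i _
      rw [← pow_add]
      by_cases hlt : (i:ℕ) + j < q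
      · rw [hmono _ hlt]
        beta_reduce
        rw [if_neg]
        intro hcon
        have := congrArg Fin.val hcon
        simp at this
        omega
      · have hiv := i.isLt
        have hiq : (i:ℕ) + j = q + ((i:ℕ) + j - q) := by omega
        rw [hiq, hmono2 _ (by omega)]
        beta_reduce
        rw [if_neg, if_neg, sub_zero]
        · intro hcon
          have := congrArg Fin.val hcon
          simp at this
          omega
        · intro hcon
          have := congrArg Fin.val hcon
          simp at this
          omega
    exact mul_left_cancel₀ hCne hc
  · -- ψ(X^(q-1)) = C (1 - q)
    have key : ∀ i : Fin q, D (X^(i:ℕ) * X^(q-1)) i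
        = if (i:ℕ) = 0 then 0 else -(C π) := by
      intro i
      rw [← pow_add]
      have hiv := i.isLt
      by_cases hi0 : (i:ℕ) = 0
      · rw [if_pos hi0, hi0, zero_add, hmono (q-1) (by omega)]
        beta_reduce
        rw [if_neg]
        intro hcon
        have := congrArg Fin.val hcon
        simp at this
        omega
      · rw [if_neg hi0]
        have hv : (i:ℕ) + (q-1) = q + ((i:ℕ) - 1) := by omega
        rw [hv, hmono2 ((i:ℕ)-1) (by omega)]
        beta_reduce
        rw [if_neg, if_pos, zero_sub]
        · apply Fin.ext
          simp
          omega
        · intro hcon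
          have := congrArg Fin.val hcon
          simp at this
          omega
    have hsum : C π * ψ (X^(q-1) : R⟦X⟧)
        = ∑ i : Fin q, (if (i:ℕ) = 0 then (0:R⟦X⟧) else -(C π)) := by
      rw [hψ]
      exact Finset.sum_congr rfl fun i _ => key i
    have hsplit : ∀ i : Fin q, (if (i:ℕ) = 0 then (0:R⟦X⟧) else -(C π))
        = -(C π) + (if i = (⟨0, by omega⟩ : Fin q) then C π else 0) := by
      intro i
      by_cases hi0 : (i:ℕ) = 0
      · rw [if_pos hi0, if_pos (Fin.ext hi0)]; ring
      · rw [if_neg hi0, if_neg (fun hcon => hi0 (congrArg Fin.val hcon))]; ring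
    rw [Finset.sum_congr rfl fun i _ => hsplit i, Finset.sum_add_distrib,
      Finset.sum_const, Finset.sum_ite_eq' Finset.univ _ (fun _ : Fin q => C π)] at hsum
    simp only [Finset.mem_univ, if_pos, Finset.card_univ, Fintype.card_fin] at hsum
    apply mul_left_cancel₀ hCne
    rw [hsum, map_sub, map_one, map_natCast, nsmul_eq_mul]
    push_cast
    ring
  · -- recurrence for ψ
    intro j hj
    have hm : j - q + q = j := by omega
    have hc : C π * ψ (X^j : R⟦X⟧)
        = C π * (X * ψ (X^(j-q) : R⟦X⟧) - C π * ψ (X^(j-q+1) : R⟦X⟧)) := by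
      rw [hψ]
      have hterm : ∀ i : Fin q, D (X^(i:ℕ) * X^j) i
          = X * D (X^(i:ℕ) * X^(j-q)) i - C π * D (X^(i:ℕ) * X^(j-q+1)) i := by
        intro i
        rw [← pow_add, ← pow_add, ← pow_add,
          show (i:ℕ) + j = ((i:ℕ) + (j - q)) + q from by omega,
          hrec ((i:ℕ) + (j-q)),
          show (i:ℕ) + (j - q) + 1 = (i:ℕ) + (j - q + 1) from by omega]
      rw [Finset.sum_congr rfl fun i _ => hterm i, Finset.sum_sub_distrib,
        ← Finset.mul_sum, ← Finset.mul_sum, ← hψ, ← hψ]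
      ring
    exact mul_left_cancel₀ hCne hc

end PsAux

open PsAux

set_option synthInstance.maxHeartbeats 1000000
set_option maxHeartbeats 1600000

/-- Formulas for `ψ` on `o_F[[X]]` for the coordinate with `[π](X) = πX + X^q`:
`ψ(1) = q/π`, `ψ(X^i) = 0` for `1 ≤ i ≤ q-2`, `ψ(X^(q-1)) = 1-q`, and
`ψ(X^i) = X·ψ(X^(i-q)) - π·ψ(X^(i-q+1))` for `i ≥ q`. -/
theorem stmt3 (p : ℕ) [Fact p.Prime] (F : Type*) [Field F] [Algebra ℚ_[p] F]
    [FiniteDimensional ℚ_[p] F] [Algebra ℤ_[p] F] [IsScalarTower ℤ_[p] ℚ_[p] F]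
    (O : Subalgebra ℤ_[p] F) (hO : O = integralClosure ℤ_[p] F)
    (π : ↥O) (hπ : Irreducible π) (q : ℕ)
    (hq : Nat.card (↥O ⧸ Ideal.span {π}) = q)
    -- `D f` is the (unique) decomposition of `f` in the basis `1, X, ..., X^(q-1)` of
    -- `↥O⟦X⟧` over `φ(↥O⟦X⟧)`, where `φ(h) = h(PowerSeries.C ↥O π * PowerSeries.X + PowerSeries.X ^ q)`:
    (D : PowerSeries ↥O → Fin q → PowerSeries ↥O)
    (hD : ∀ f : PowerSeries ↥O,
      f = ∑ i : Fin q, PowerSeries.X ^ (i : ℕ) * PSComp (D f i) (PowerSeries.C π * PowerSeries.X + PowerSeries.X ^ q))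
    -- `ψ` is characterized by `φ(ψ(f)) = (1/π)·Tr(f)`, i.e. `π·ψ(f)` is the sum of the
    -- diagonal entries of the matrix of multiplication by `f` in the above basis:
    (ψ : PowerSeries ↥O → PowerSeries ↥O)
    (hψ : ∀ f : PowerSeries ↥O,
      PowerSeries.C (π) * ψ f = ∑ i : Fin q, D (PowerSeries.X ^ (i : ℕ) * f) i) :
    PowerSeries.C π * ψ 1 = PowerSeries.C ((q : ℕ) : ↥O) ∧
    (∀ i : ℕ, 1 ≤ i → i ≤ q - 2 → ψ (PowerSeries.X ^ i) = 0) ∧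
    ψ (PowerSeries.X ^ (q - 1)) = PowerSeries.C (1 - ((q : ℕ) : ↥O)) ∧
    (∀ i : ℕ, q ≤ i → ψ (PowerSeries.X ^ i) =
      PowerSeries.X * ψ (PowerSeries.X ^ (i - q)) -
        PowerSeries.C π * ψ (PowerSeries.X ^ (i - q + 1))) := by
  subst hO
  haveI : IsNoetherianRing ↥(integralClosure ℤ_[p] F) :=
    integralClosure.isNoetherianRing (K := ℚ_[p]) (L := F)
  have hπ0 : π ≠ 0 := hπ.ne_zero
  have hq2 : 2 ≤ q := by
    by_contra hlt
    push_neg at hlt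
    interval_cases q
    · have h1 := hD 1
      rw [Finset.univ_eq_empty, Finset.sum_empty] at h1
      exact one_ne_zero h1
    · have hsub := Nat.card_eq_one_iff_unique.mp hq
      have htop := Ideal.Quotient.subsingleton_iff.mp hsub.1
      exact hπ.not_isUnit (Ideal.span_singleton_eq_top.mp htop)
  have hKrull : ∀ r : ↥(integralClosure ℤ_[p] F), (∀ t, π^t ∣ r) → r = 0 := by
    intro r hr
    have hbot : (⨅ t : ℕ, (Ideal.span {π} : Ideal ↥(integralClosure ℤ_[p] F)) ^ t) = ⊥ :=
      Ideal.iInf_pow_eq_bot_of_isDomain _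
        (fun htop => hπ.not_isUnit (Ideal.span_singleton_eq_top.mp htop))
    have hmem : r ∈ ⨅ t : ℕ, (Ideal.span {π} : Ideal ↥(integralClosure ℤ_[p] F)) ^ t := by
      rw [Submodule.mem_iInf]
      intro t
      rw [Ideal.span_singleton_pow, Ideal.mem_span_singleton]
      exact hr t
    rw [hbot] at hmem
    simpa using hmem
  exact psi_formulas hπ0 hq2 hKrull D hD ψ hψ
end

section
/- Let $F = \mathbf{Q}_{p^2}$ with $q = p^2$, uniformizer $p$, and Lubin--Tate group with $[p](X) = pX + X^q$. If $p$ is odd (so $q \neq 2$), then $\psi(X) = 0$, and consequently each polynomial $c_{1,q^k}$ (the coefficient of $X^{q^k}$ in $[a](X)$, as a polynomial in $a$) lies in $\operatorname{Pol}(o_F[[X]]^{\psi=0})$ for all $k \geq 0$. -/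
open PowerSeries

/-- Evaluation `A(u,v)` of a two-variable power series `A ∈ R[[X,Y]] = (R[[X]])[[Y]]`
at `u, v` with zero constant term. -/
noncomputable def PSEval2 {R : Type*} [CommRing R] (A : PowerSeries (PowerSeries R))
    (u v : PowerSeries R) : PowerSeries R :=
  PowerSeries.mk fun m => ∑ j ∈ Finset.range (m + 1),
    PowerSeries.coeff m (PSComp (PowerSeries.coeff j A) u * v ^ j)

/-- A Lubin--Tate formal group over `O` attached to the uniformizer `π`, with residue
cardinality `q`: the addition law `add ∈ O[[X,Y]]`, the endomorphisms `[a](X)` for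
`a ∈ O`, normalized so that `[a](X) = aX + O(X^2)`, compatible with the ring structure
of `O`, and such that `[π](X) ≡ X^q mod π`. -/
structure LubinTate (O : Type*) [CommRing O] (π : O) (q : ℕ) where
  add : PowerSeries (PowerSeries O)
  endo : O → PowerSeries O
  endo_const : ∀ a, PowerSeries.constantCoeff (endo a) = 0
  endo_lin : ∀ a, PowerSeries.coeff 1 (endo a) = a
  endo_one : endo 1 = PowerSeries.X
  endo_mul : ∀ a b, endo (a * b) = PSComp (endo a) (endo b)
  endo_add : ∀ a b, endo (a + b) = PSEval2 add (endo a) (endo b)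
  add_X_zero : PSEval2 add PowerSeries.X 0 = PowerSeries.X
  add_zero_X : PSEval2 add 0 PowerSeries.X = PowerSeries.X
  endo_pi_frob : ∀ n : ℕ,
    PowerSeries.coeff n (endo π) - (if n = q then 1 else 0) ∈ Ideal.span {π}

namespace LTaux
variable {R : Type*} [CommRing R]

variable {R : Type*} [CommRing R]

lemma PSComp_coeff (f g : PowerSeries R) (m : ℕ) :
    coeff m (PSComp f g) = ∑ n ∈ Finset.range (m + 1),
      coeff m (C (coeff n f) * g ^ n) := by
  simp [PSComp]


lemma PSComp_sub (f f' g : PowerSeries R) : PSComp (f - f') g = PSComp f g - PSComp f' g := by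
  ext m
  simp only [PSComp_coeff, map_sub, ← Finset.sum_sub_distrib, sub_mul]

lemma PSComp_C_mul (c : R) (f g : PowerSeries R) :
    PSComp (C c * f) g = C c * PSComp f g := by
  ext m
  simp only [PSComp_coeff, coeff_C_mul, Finset.mul_sum, map_mul, mul_assoc]


lemma PSComp_map {S : Type*} [CommRing S] (ρ : R →+* S) (f g : PowerSeries R) :
    map ρ (PSComp f g) = PSComp (map ρ f) (map ρ g) := by
  ext m
  rw [coeff_map, PSComp_coeff, map_sum, PSComp_coeff]
  refine Finset.sum_congr rfl fun n _ => ?_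
  rw [← coeff_map, map_mul, map_pow, map_C, coeff_map]

/-- coefficient of a term `X^i' * PSComp g (X^q)` at `i + q*n`, for `i, i' < q`. -/
lemma coeff_term {q : ℕ} (hq1 : 0 < q) (i i' : Fin q) (n : ℕ) (g : PowerSeries R) :
    coeff ((i : ℕ) + q * n) (X ^ (i' : ℕ) * PSComp g (X ^ q)) =
      if i' = i then coeff n g else 0 := by
  rw [coeff_X_pow_mul']
  by_cases hle : (i' : ℕ) ≤ (i : ℕ) + q * n
  · rw [if_pos hle, PSComp_coeff]
    by_cases hii : i' = i
    · subst hii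
      rw [if_pos rfl]
      have hd : (i' : ℕ) + q * n - (i' : ℕ) = q * n := by omega
      rw [hd]
      rw [Finset.sum_congr rfl (fun n' _ => ?_), Finset.sum_ite_eq'
        (Finset.range (q * n + 1)) n (fun n' => coeff n' g),
        if_pos (Finset.mem_range.2 (by nlinarith))]
      · rw [← pow_mul, coeff_C_mul, coeff_X_pow]
        by_cases h : q * n = q * n'
        · have : n' = n := by
            have := Nat.eq_of_mul_eq_mul_left hq1 h.symm
            omega
          simp [h, this]
        · have : ¬ (n' = n) := fun hc => h (by rw [hc])
          simp [h, this]
    · rw [if_neg hii]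
      refine Finset.sum_eq_zero fun n' _ => ?_
      rw [← pow_mul, coeff_C_mul, coeff_X_pow]
      have : ¬ ((i : ℕ) + q * n - (i' : ℕ) = q * n') := by
        intro hc
        apply hii
        have h2 : (i' : ℕ) + q * n' = (i : ℕ) + q * n := by omega
        have h3 : ((i' : ℕ) + q * n') % q = ((i : ℕ) + q * n) % q := by rw [h2]
        rw [Nat.add_mul_mod_self_left, Nat.add_mul_mod_self_left,
          Nat.mod_eq_of_lt i'.2, Nat.mod_eq_of_lt i.2] at h3
        exact Fin.ext h3
      simp [this]
  · rw [if_neg hle, if_neg (fun h : i' = i => hle (h ▸ by omega))]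

lemma step1 (π : R) {q : ℕ} (hq1 : 0 < q) (g : Fin q → PowerSeries R)
    (h : ∑ i : Fin q, X ^ (i : ℕ) * PSComp (g i) (C π * X + X ^ q) = 0)
    (i : Fin q) (n : ℕ) : coeff n (g i) ∈ Ideal.span {π} := by
  set I := Ideal.span {π}
  set ρ := Ideal.Quotient.mk I
  have hρπ : ρ π = 0 := Ideal.Quotient.eq_zero_iff_mem.2 (Ideal.mem_span_singleton_self π)
  have hmap : (∑ i' : Fin q, X ^ (i' : ℕ) *
      PSComp (map ρ (g i')) (X ^ q) : PowerSeries (R ⧸ I)) = 0 := by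
    have := congrArg (map ρ) h
    rw [map_sum, map_zero] at this
    rw [← this]
    refine Finset.sum_congr rfl fun i' _ => ?_
    rw [map_mul, map_pow, PowerSeries.map_X, PSComp_map, map_add, map_mul, map_pow,
      PowerSeries.map_X, PowerSeries.map_C, hρπ, map_zero, zero_mul, zero_add]
  have hc := congrArg (coeff ((i : ℕ) + q * n)) hmap
  rw [map_sum, map_zero] at hc
  rw [Finset.sum_congr rfl (fun i' _ => coeff_term hq1 i i' n (map ρ (g i'))),
    Finset.sum_ite_eq' Finset.univ i (fun i' => coeff n (map ρ (g i'))),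
    if_pos (Finset.mem_univ i), coeff_map] at hc
  exact Ideal.Quotient.eq_zero_iff_mem.1 hc

lemma step2 [IsDomain R] {π : R} (hπ0 : π ≠ 0) {q : ℕ} (hq1 : 0 < q) :
    ∀ (k : ℕ) (g : Fin q → PowerSeries R),
      (∑ i : Fin q, X ^ (i : ℕ) * PSComp (g i) (C π * X + X ^ q) = 0) →
      ∀ (i : Fin q) (n : ℕ), coeff n (g i) ∈ Ideal.span {π} ^ k := by
  intro k
  induction k with
  | zero => intro g _ i n; simp
  | succ k ih =>
    intro g hg i n
    have h1 : ∀ (i : Fin q) (n : ℕ), ∃ c : R, coeff n (g i) = π * c := by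
      intro i n
      obtain ⟨b, hb⟩ := Ideal.mem_span_singleton'.1 (step1 π hq1 g hg i n)
      exact ⟨b, by rw [← hb, mul_comm]⟩
    choose c hc using h1
    set h : Fin q → PowerSeries R := fun i => PowerSeries.mk (c i) with hh
    have hgh : ∀ i, g i = C π * h i := by
      intro i; ext n
      rw [coeff_C_mul, hh, coeff_mk, ← hc]
    have hrel : C π * ∑ i : Fin q, X ^ (i : ℕ) * PSComp (h i) (C π * X + X ^ q) = 0 := by
      rw [Finset.mul_sum, ← hg]
      refine Finset.sum_congr rfl fun i' _ => ?_
      rw [hgh i', PSComp_C_mul]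
      ring
    have hC0 : (C π : PowerSeries R) ≠ 0 := fun hC => hπ0 (by
      simpa using congrArg (constantCoeff) hC)
    have hrel' : ∑ i : Fin q, X ^ (i : ℕ) * PSComp (h i) (C π * X + X ^ q) = 0 :=
      (mul_eq_zero.1 hrel).resolve_left hC0
    have hcm : coeff n (h i) = c i n := coeff_mk n (c i)
    rw [hc i n, pow_succ, ← hcm, mul_comm π _]
    exact Ideal.mul_mem_mul (ih h hrel' i n) (Ideal.mem_span_singleton_self π)

lemma uniq [IsDomain R] {π : R} (hπ0 : π ≠ 0)
    (hbot : (⨅ k : ℕ, Ideal.span {π} ^ k) = ⊥) {q : ℕ} (hq1 : 0 < q)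
    (g g' : Fin q → PowerSeries R)
    (h : ∑ i : Fin q, X ^ (i : ℕ) * PSComp (g i) (C π * X + X ^ q) =
      ∑ i : Fin q, X ^ (i : ℕ) * PSComp (g' i) (C π * X + X ^ q)) :
    ∀ i, g i = g' i := by
  have hz : ∑ i : Fin q, X ^ (i : ℕ) * PSComp (g i - g' i) (C π * X + X ^ q) = 0 := by
    have : ∀ i : Fin q, X ^ (i : ℕ) * PSComp (g i - g' i) (C π * X + X ^ q) =
        X ^ (i : ℕ) * PSComp (g i) (C π * X + X ^ q) -
        X ^ (i : ℕ) * PSComp (g' i) (C π * X + X ^ q) := fun i => by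
      rw [PSComp_sub, mul_sub]
    rw [Finset.sum_congr rfl fun i _ => this i, Finset.sum_sub_distrib, h, sub_self]
  intro i
  ext n
  have hmem : coeff n (g i - g' i) ∈ ⨅ k : ℕ, Ideal.span {π} ^ k :=
    Ideal.mem_iInf.2 fun k => step2 hπ0 hq1 k _ hz i n
  rw [hbot] at hmem
  have := Ideal.mem_bot.1 hmem
  rw [map_sub] at this
  exact sub_eq_zero.1 this

lemma PSComp_C (c : R) (g : PowerSeries R) : PSComp (C c) g = C c := by
  ext m
  rw [PSComp_coeff, Finset.sum_eq_single 0]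
  · simp
  · intro n _ hn
    simp [coeff_C, hn]
  · simp

lemma PSComp_zero (g : PowerSeries R) : PSComp 0 g = 0 := by
  simpa using PSComp_C 0 g

lemma PSComp_one (g : PowerSeries R) : PSComp 1 g = 1 := by
  simpa using PSComp_C 1 g

lemma PSComp_X (g : PowerSeries R) (hg : constantCoeff g = 0) : PSComp X g = g := by
  ext m
  rw [PSComp_coeff]
  rcases Nat.eq_zero_or_pos m with hm | hm
  · subst hm
    simp [coeff_zero_eq_constantCoeff, hg]
  · rw [Finset.sum_eq_single 1]
    · simp
    · intro n _ hn
      simp [coeff_X, hn]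
    · intro h
      exact absurd (Finset.mem_range.2 (by omega)) h

end LTaux

set_option synthInstance.maxHeartbeats 1000000 in
set_option maxHeartbeats 1000000 in
/-- For `F = ℚ_(p²)` with `p` odd, `q = p²`, `[p](X) = pX + X^q`: `ψ(X) = 0`, and each
`c_(1,q^k)` lies in `Pol(o_F[[X]]^(ψ=0))`. -/
theorem stmt14 (p : ℕ) [Fact p.Prime] (F : Type*) [Field F] [Algebra ℚ_[p] F]
    [FiniteDimensional ℚ_[p] F] [Algebra ℤ_[p] F] [IsScalarTower ℤ_[p] ℚ_[p] F]
    (O : Subalgebra ℤ_[p] F) (hO : O = integralClosure ℤ_[p] F)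
    (hp2 : p ≠ 2) (hd : Module.finrank ℚ_[p] F = 2)
    (hπ : Irreducible ((p : ℕ) : ↥O)) (q : ℕ) (hq2 : q = p ^ 2)
    (hq : Nat.card (↥O ⧸ Ideal.span {((p : ℕ) : ↥O)}) = q)
    (LT : LubinTate ↥O ((p : ℕ) : ↥O) q)
    (hcoord : LT.endo ((p : ℕ) : ↥O) =
      PowerSeries.C ((p : ℕ) : ↥O) * PowerSeries.X + PowerSeries.X ^ q)
    -- `D f` is the (unique) decomposition of `f` in the basis `1, X, ..., X^(q-1)` of
    -- `↥O⟦X⟧` over `φ(↥O⟦X⟧)`, where `φ(h) = h(LT.endo ((p : ℕ) : ↥O))`: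
    (D : PowerSeries ↥O → Fin q → PowerSeries ↥O)
    (hD : ∀ f : PowerSeries ↥O,
      f = ∑ i : Fin q, PowerSeries.X ^ (i : ℕ) * PSComp (D f i) (LT.endo ((p : ℕ) : ↥O)))
    -- `ψ` is characterized by `φ(ψ(f)) = (1/π)·Tr(f)`, i.e. `π·ψ(f)` is the sum of the
    -- diagonal entries of the matrix of multiplication by `f` in the above basis:
    (ψ : PowerSeries ↥O → PowerSeries ↥O)
    (hψ : ∀ f : PowerSeries ↥O,
      PowerSeries.C (((p : ℕ) : ↥O)) * ψ f = ∑ i : Fin q, D (PowerSeries.X ^ (i : ℕ) * f) i)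
    -- `cpoly f n` is the integer-valued polynomial `c_{f,n} ∈ F[T]` with
    -- `f([a](X)) = ∑ n, c_{f,n}(a) X^n`:
    (cpoly : PowerSeries ↥O → ℕ → Polynomial F)
    (hcpoly : ∀ (f : PowerSeries ↥O) (n : ℕ) (a : ↥O),
      Polynomial.eval (algebraMap ↥O F a) (cpoly f n) =
        algebraMap ↥O F (PowerSeries.coeff n (PSComp f (LT.endo a)))) :
    ψ PowerSeries.X = 0 ∧
    ∀ k : ℕ, cpoly PowerSeries.X (q ^ k) ∈
      Submodule.span ↥O {c : Polynomial F | ∃ f : PowerSeries ↥O, ψ f = 0 ∧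
        ∃ n : ℕ, c = cpoly f n} := by
  haveI hNoe : IsNoetherianRing ↥O := by
    rw [hO]
    exact IsIntegralClosure.isNoetherianRing ℤ_[p] ℚ_[p] F _
  have hprime : p.Prime := Fact.out
  have hp3 : 3 ≤ p := by
    have := hprime.two_le
    omega
  have hq9 : 9 ≤ q := by
    have : 3 ^ 2 ≤ p ^ 2 := Nat.pow_le_pow_left hp3 2
    omega
  have hq1 : 0 < q := by omega
  have hπ0 : ((p : ℕ) : ↥O) ≠ 0 := hπ.ne_zero
  have htop : Ideal.span {((p : ℕ) : ↥O)} ≠ ⊤ := fun h => hπ.not_isUnit (Ideal.span_singleton_eq_top.1 h)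
  have hbot : (⨅ k : ℕ, Ideal.span {((p : ℕ) : ↥O)} ^ k) = ⊥ :=
    Ideal.iInf_pow_eq_bot_of_isDomain (Ideal.span {((p : ℕ) : ↥O)}) htop
  have hC0 : (C ((p : ℕ) : ↥O) : PowerSeries ↥O) ≠ 0 := fun hC => hπ0 (by
    simpa using congrArg (constantCoeff) hC)
  have hconstφ : constantCoeff (C ((p : ℕ) : ↥O) * X + X ^ q) = 0 := by
    rw [← hcoord]
    exact LT.endo_const ((p : ℕ) : ↥O)
  -- the values of `D` on the powers `X^(i+1)`, at the diagonal entry `i`: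
  have hDzero : ∀ i : Fin q, D (X ^ ((i : ℕ) + 1)) i = 0 := by
    intro i
    by_cases hcase : (i : ℕ) + 1 < q
    · have he : ∑ i' : Fin q, X ^ (i' : ℕ) *
          PSComp ((fun i' => if i' = (⟨(i : ℕ) + 1, hcase⟩ : Fin q) then 1 else 0) i')
            (C ((p : ℕ) : ↥O) * X + X ^ q) = X ^ ((i : ℕ) + 1) := by
        rw [Finset.sum_congr rfl (fun i' _ => ?_), Finset.sum_ite_eq' Finset.univ
          (⟨(i : ℕ) + 1, hcase⟩ : Fin q) (fun i' => (X : PowerSeries ↥O) ^ (i' : ℕ)),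
          if_pos (Finset.mem_univ _)]
        · by_cases h' : i' = (⟨(i : ℕ) + 1, hcase⟩ : Fin q)
          · simp [h', LTaux.PSComp_one]
          · simp [h', LTaux.PSComp_zero]
      have hd1 := hD (X ^ ((i : ℕ) + 1))
      rw [hcoord] at hd1
      have huq := LTaux.uniq hπ0 hbot hq1 (D (X ^ ((i : ℕ) + 1))) _
        (hd1.symm.trans he.symm) i
      have hij : i ≠ (⟨(i : ℕ) + 1, hcase⟩ : Fin q) := by
        intro h
        have := congrArg Fin.val h
        simp at this
      rw [huq, if_neg hij]
    · have hiq : (i : ℕ) + 1 = q := by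
        have := i.2
        omega
      have h0q : (0 : ℕ) < q := hq1
      have h1q : (1 : ℕ) < q := by omega
      have hz01 : (⟨0, h0q⟩ : Fin q) ≠ ⟨1, h1q⟩ := by
        intro h
        have := congrArg Fin.val h
        simp at this
      have hsplit : ∀ i' : Fin q, X ^ (i' : ℕ) *
          PSComp ((fun i'' => if i'' = (⟨0, h0q⟩ : Fin q) then X
            else if i'' = (⟨1, h1q⟩ : Fin q) then C (-((p : ℕ) : ↥O)) else 0) i')
            (C ((p : ℕ) : ↥O) * X + X ^ q) =
          (if i' = (⟨0, h0q⟩ : Fin q) then (C ((p : ℕ) : ↥O) * X + X ^ q) else 0) +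
          (if i' = (⟨1, h1q⟩ : Fin q) then X * C (-((p : ℕ) : ↥O)) else 0) := by
        intro i'
        by_cases h0 : i' = (⟨0, h0q⟩ : Fin q)
        · rw [if_pos h0, if_neg (h0 ▸ hz01), add_zero, h0]
          simp only [if_pos rfl, pow_zero, one_mul]
          exact LTaux.PSComp_X _ hconstφ
        · by_cases h1 : i' = (⟨1, h1q⟩ : Fin q)
          · rw [if_neg h0, if_pos h1, zero_add, h1]
            simp only [eq_false (Ne.symm hz01), eq_self_iff_true, if_false, if_true, pow_one]
            rw [LTaux.PSComp_C]
          · rw [if_neg h0, if_neg h1, add_zero]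
            simp [h0, h1, LTaux.PSComp_zero]
      have he : ∑ i' : Fin q, X ^ (i' : ℕ) *
          PSComp ((fun i'' => if i'' = (⟨0, h0q⟩ : Fin q) then X
            else if i'' = (⟨1, h1q⟩ : Fin q) then C (-((p : ℕ) : ↥O)) else 0) i')
            (C ((p : ℕ) : ↥O) * X + X ^ q) = X ^ ((i : ℕ) + 1) := by
        rw [Finset.sum_congr rfl (fun i' _ => hsplit i'), Finset.sum_add_distrib,
          Finset.sum_ite_eq' Finset.univ (⟨0, h0q⟩ : Fin q),
          Finset.sum_ite_eq' Finset.univ (⟨1, h1q⟩ : Fin q),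
          if_pos (Finset.mem_univ _), if_pos (Finset.mem_univ _), hiq, map_neg]
        ring
      have hd1 := hD (X ^ ((i : ℕ) + 1))
      rw [hcoord] at hd1
      have huq := LTaux.uniq hπ0 hbot hq1 (D (X ^ ((i : ℕ) + 1))) _
        (hd1.symm.trans he.symm) i
      have hi0 : i ≠ (⟨0, h0q⟩ : Fin q) := by
        intro h
        have := congrArg Fin.val h
        simp at this
        omega
      have hi1 : i ≠ (⟨1, h1q⟩ : Fin q) := by
        intro h
        have := congrArg Fin.val h
        simp at this
        omega
      rw [huq, if_neg hi0, if_neg hi1]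
  have hsum : C ((p : ℕ) : ↥O) * ψ X = 0 := by
    rw [hψ X]
    refine Finset.sum_eq_zero fun i _ => ?_
    rw [← pow_succ]
    exact hDzero i
  have hψX : ψ X = 0 := (mul_eq_zero.1 hsum).resolve_left hC0
  exact ⟨hψX, fun k => Submodule.subset_span ⟨X, hψX, q ^ k, rfl⟩⟩
end

section
/- Let $F$ be a finite extension of $\mathbf{Q}_p$ with residue field $k$ and Lubin--Tate group $\operatorname{LT}$. If $f, g \in o_F[[X]]^{\psi=0}$ and $m, \ell \geq 0$, then the product $c_{f,m}(T)\cdot c_{g,\ell}(T)$ of the associated integer-valued coefficient polynomials lies in $\operatorname{Pol}(o_F[[X]]^{\psi=0}) + \pi\cdot\operatorname{Int}$; i.e., the image of $\operatorname{Pol}(o_F[[X]]^{\psi=0})$ in $\operatorname{Int}/\pi\operatorname{Int}$ is a subring. -/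
open PowerSeries

namespace PSAux
open PowerSeries
variable {R S : Type*} [CommRing R] [CommRing S]

theorem coeff_comp (f g : PowerSeries R) (m : ℕ) :
    coeff m (PSComp f g) =
      ∑ n ∈ Finset.range (m + 1), coeff m (C (coeff n f) * g ^ n) := by
  simp [PSComp, coeff_mk]

theorem coeff_pow_eq_zero {g : PowerSeries R} (hg : constantCoeff g = 0)
    {m n : ℕ} (h : m < n) : coeff m (g ^ n) = 0 := by
  obtain ⟨h', rfl⟩ := X_dvd_iff.mpr hg
  rw [mul_pow, coeff_X_pow_mul', if_neg (by omega)]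

theorem coeff_comp_of_lt {g : PowerSeries R} (hg : constantCoeff g = 0)
    (f : PowerSeries R) {m N : ℕ} (h : m < N) :
    coeff m (PSComp f g) =
      ∑ n ∈ Finset.range N, coeff m (C (coeff n f) * g ^ n) := by
  rw [coeff_comp]
  refine Finset.sum_subset (by intro x hx; simp at hx ⊢; omega) ?_
  intro x hx hx'
  simp only [Finset.mem_range] at hx hx'
  rw [coeff_C_mul, coeff_pow_eq_zero hg (by omega), mul_zero]

theorem coeff_comp_eval₂ {g : PowerSeries R} (hg : constantCoeff g = 0)
    (f : PowerSeries R) {m N : ℕ} (h : m < N) :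
    coeff m (PSComp f g) = coeff m (Polynomial.eval₂ (C) g (trunc N f)) := by
  obtain ⟨N, rfl⟩ : ∃ N', N = N' + 1 := ⟨N - 1, by omega⟩
  rw [Polynomial.eval₂_eq_sum_range' (C) (natDegree_trunc_lt f N) g,
    coeff_comp_of_lt hg f h, map_sum]
  refine Finset.sum_congr rfl fun i hi => ?_
  simp only [Finset.mem_range] at hi
  rw [coeff_trunc, if_pos hi]

theorem coeff_eval₂_eq_zero {g : PowerSeries R} (hg : constantCoeff g = 0)
    (P : Polynomial R) {m N : ℕ} (hP : ∀ i < N, P.coeff i = 0) (hm : m < N) :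
    coeff m (Polynomial.eval₂ (C) g P) = 0 := by
  have hd : P.natDegree < max N (P.natDegree + 1) := by omega
  rw [Polynomial.eval₂_eq_sum_range' (C) hd g, map_sum]
  refine Finset.sum_eq_zero fun i _ => ?_
  rcases lt_or_ge i N with hi | hi
  · rw [hP i hi, map_zero, zero_mul, map_zero]
  · rw [coeff_C_mul, coeff_pow_eq_zero hg (by omega), mul_zero]



theorem comp_add (f₁ f₂ g : PowerSeries R) :
    PSComp (f₁ + f₂) g = PSComp f₁ g + PSComp f₂ g := by
  ext m
  simp only [coeff_comp, map_add, ← Finset.sum_add_distrib]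
  refine Finset.sum_congr rfl fun n _ => ?_
  rw [add_mul, map_add]

theorem comp_sub (f₁ f₂ g : PowerSeries R) :
    PSComp (f₁ - f₂) g = PSComp f₁ g - PSComp f₂ g := by
  ext m
  simp only [coeff_comp, map_sub, ← Finset.sum_sub_distrib]
  refine Finset.sum_congr rfl fun n _ => ?_
  rw [sub_mul, map_sub]

theorem comp_C (c : R) (g : PowerSeries R) : PSComp (C c) g = C c := by
  ext m
  rw [coeff_comp, Finset.sum_eq_single 0]
  · simp
  · intro n hn hn0
    simp only [Finset.mem_range] at hn
    rw [coeff_C, if_neg hn0, map_zero, zero_mul, map_zero]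
  · simp

theorem comp_C_mul (c : R) (f g : PowerSeries R) :
    PSComp (C c * f) g = C c * PSComp f g := by
  ext m
  simp only [coeff_comp, coeff_C_mul, Finset.mul_sum]
  refine Finset.sum_congr rfl fun n _ => ?_
  rw [mul_assoc]

theorem constantCoeff_comp (f g : PowerSeries R) :
    constantCoeff (PSComp f g) = constantCoeff f := by
  have := coeff_comp f g 0
  simp only [Finset.range_one, Finset.sum_singleton, pow_zero, mul_one, coeff_zero_eq_constantCoeff] at this
  simpa using this

theorem coeff_comp_congr {A B : PowerSeries R} (h : ∀ n ≤ m, coeff n A = coeff n B)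
    (g : PowerSeries R) : coeff m (PSComp A g) = coeff m (PSComp B g) := by
  rw [coeff_comp, coeff_comp]
  refine Finset.sum_congr rfl fun n hn => ?_
  simp only [Finset.mem_range] at hn
  rw [h n (by omega)]


theorem comp_mul {g : PowerSeries R} (hg : constantCoeff g = 0) (f₁ f₂ : PowerSeries R) :
    PSComp (f₁ * f₂) g = PSComp f₁ g * PSComp f₂ g := by
  ext m
  rw [coeff_comp_eval₂ hg (f₁ * f₂) (Nat.lt_succ_self m), coeff_mul]
  have h₁ : ∀ p ∈ Finset.HasAntidiagonal.antidiagonal m, coeff p.1 (PSComp f₁ g) * coeff p.2 (PSComp f₂ g)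
      = coeff p.1 (Polynomial.eval₂ (C) g (trunc (m+1) f₁)) *
        coeff p.2 (Polynomial.eval₂ (C) g (trunc (m+1) f₂)) := by
    intro p hp
    rw [Finset.HasAntidiagonal.mem_antidiagonal] at hp
    rw [coeff_comp_eval₂ hg f₁ (show p.1 < m + 1 by omega),
      coeff_comp_eval₂ hg f₂ (show p.2 < m + 1 by omega)]
  rw [Finset.sum_congr rfl h₁, ← coeff_mul, ← Polynomial.eval₂_mul]
  have key : coeff m (Polynomial.eval₂ (C) g
      (trunc (m+1) f₁ * trunc (m+1) f₂ - trunc (m+1) (f₁ * f₂))) = 0 := by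
    refine coeff_eval₂_eq_zero hg _ (fun i hi => ?_) (Nat.lt_succ_self m)
    rw [Polynomial.coeff_sub, Polynomial.coeff_mul, coeff_trunc, if_pos hi,
      PowerSeries.coeff_mul]
    rw [sub_eq_zero]
    refine Finset.sum_congr rfl fun p hp => ?_
    rw [Finset.HasAntidiagonal.mem_antidiagonal] at hp
    rw [coeff_trunc, if_pos (by omega), coeff_trunc, if_pos (by omega)]
  rw [Polynomial.eval₂_sub, map_sub, sub_eq_zero] at key
  exact key.symm

theorem comp_pow {g : PowerSeries R} (hg : constantCoeff g = 0) (f : PowerSeries R) (n : ℕ) :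
    PSComp (f ^ n) g = PSComp f g ^ n := by
  induction n with
  | zero => simpa using comp_C 1 g
  | succ n ih => rw [pow_succ, pow_succ, comp_mul hg, ih]

theorem comp_sum {g : PowerSeries R} {ι : Type*} (s : Finset ι) (F : ι → PowerSeries R) :
    PSComp (∑ i ∈ s, F i) g = ∑ i ∈ s, PSComp (F i) g := by
  induction s using Finset.cons_induction with
  | empty => simpa using comp_C 0 g
  | cons a s ha ih => rw [Finset.sum_cons, comp_add, ih, Finset.sum_cons]

theorem comp_assoc {g h : PowerSeries R} (hg : constantCoeff g = 0)
    (hh : constantCoeff h = 0) (f : PowerSeries R) :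
    PSComp (PSComp f g) h = PSComp f (PSComp g h) := by
  ext m
  have hgh : constantCoeff (PSComp g h) = 0 := by rw [constantCoeff_comp, hg]
  set B : PowerSeries R := Polynomial.eval₂ (C) g (trunc (m+1) f) with hB
  have h1 : coeff m (PSComp (PSComp f g) h) = coeff m (PSComp B h) := by
    refine coeff_comp_congr (fun n hn => ?_) h
    rw [coeff_comp_eval₂ hg f (show n < m + 1 by omega)]
  have hBsum : B = ∑ i ∈ Finset.range (m+1), C (coeff i f) * g ^ i := by
    rw [hB, Polynomial.eval₂_eq_sum_range' (C) (natDegree_trunc_lt f m) g]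
    refine Finset.sum_congr rfl fun i hi => ?_
    rw [Finset.mem_range] at hi
    rw [coeff_trunc, if_pos hi]
  have h2 : PSComp B h = ∑ i ∈ Finset.range (m+1), C (coeff i f) * (PSComp g h) ^ i := by
    rw [hBsum, comp_sum]
    refine Finset.sum_congr rfl fun i _ => ?_
    rw [comp_C_mul, comp_pow hh]
  have h3 : coeff m (PSComp f (PSComp g h)) =
      coeff m (∑ i ∈ Finset.range (m+1), C (coeff i f) * (PSComp g h) ^ i) := by
    rw [coeff_comp_of_lt hgh f (Nat.lt_succ_self m), map_sum]
  rw [h1, h2, h3]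

theorem map_comp (σ : R →+* S) (f g : PowerSeries R) :
    PowerSeries.map σ (PSComp f g) = PSComp (PowerSeries.map σ f) (PowerSeries.map σ g) := by
  ext m
  rw [coeff_map, coeff_comp, coeff_comp, map_sum]
  refine Finset.sum_congr rfl fun n _ => ?_
  have h2 : (PowerSeries.map σ) (C (coeff n f) * g ^ n)
      = C (coeff n (PowerSeries.map σ f)) * (PowerSeries.map σ g) ^ n := by
    rw [map_mul, map_pow, PowerSeries.map_C, coeff_map]
  rw [← coeff_map, h2]

theorem comp_Xpow {g : PowerSeries R} (hg : constantCoeff g = 0) (s : ℕ) :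
    PSComp (X ^ s) g = g ^ s := by
  ext m
  rw [coeff_comp]
  rcases le_or_gt s m with hs | hs
  · rw [Finset.sum_eq_single s]
    · rw [coeff_X_pow, if_pos rfl, map_one, one_mul]
    · intro n hn hns
      rw [coeff_X_pow, if_neg hns, map_zero, zero_mul, map_zero]
    · intro h
      simp only [Finset.mem_range] at h
      omega
  · rw [coeff_pow_eq_zero hg hs]
    refine Finset.sum_eq_zero fun n hn => ?_
    rw [Finset.mem_range] at hn
    rw [coeff_X_pow, if_neg (by omega), map_zero, zero_mul, map_zero]

theorem coeff_comp_Xpow {s : ℕ} (hs : 0 < s) (B : PowerSeries R) (j : ℕ) :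
    coeff j (PSComp B (X ^ s)) = if s ∣ j then coeff (j / s) B else 0 := by
  rw [coeff_comp]
  have each : ∀ n, coeff j (C (coeff n B) * ((X:PowerSeries R) ^ s) ^ n)
      = if j = s * n then coeff n B else 0 := by
    intro n
    rw [← pow_mul, coeff_C_mul, coeff_X_pow]
    split_ifs <;> simp
  simp only [each]
  by_cases hdvd : s ∣ j
  · obtain ⟨c, rfl⟩ := hdvd
    rw [if_pos ⟨c, rfl⟩, Finset.sum_eq_single c]
    · rw [if_pos rfl, Nat.mul_div_cancel_left c hs]
    · intro n _ hns
      rw [if_neg (fun h => hns (Nat.eq_of_mul_eq_mul_left hs h.symm))]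
    · intro h
      simp only [Finset.mem_range] at h
      exfalso
      exact h (by nlinarith)
  · rw [if_neg hdvd]
    refine Finset.sum_eq_zero fun n _ => ?_
    rw [if_neg (fun h => hdvd ⟨n, h⟩)]

theorem coeff_mul_comp_Xpow (A B : PowerSeries R) {s m ℓ : ℕ} (hs : m < s) :
    coeff (m + s * ℓ) (A * PSComp B (X ^ s)) =
      ∑ k ∈ Finset.range (ℓ + 1), coeff (m + s * (ℓ - k)) A * coeff k B := by
  have hs0 : 0 < s := by omega
  set N := m + s * ℓ with hN
  rw [coeff_mul, Finset.Nat.sum_antidiagonal_eq_sum_range_succ_mk]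
  have h1 : ∀ i ∈ Finset.range (N + 1),
      coeff i A * coeff (N - i) (PSComp B (X ^ s)) =
        if s ∣ N - i then coeff i A * coeff ((N - i) / s) B else 0 := by
    intro i _
    rw [coeff_comp_Xpow hs0, mul_ite, mul_zero]
  rw [Finset.sum_congr rfl h1, ← Finset.sum_filter]
  refine Finset.sum_nbij' (fun a => (N - a) / s) (fun k => m + s * (ℓ - k)) ?_ ?_ ?_ ?_ ?_
  · intro a ha
    simp only [Finset.mem_filter, Finset.mem_range] at ha
    obtain ⟨ha1, c, hc⟩ := ha
    rw [hc, Nat.mul_div_cancel_left c hs0, Finset.mem_range]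
    have h2 : s * c ≤ N := hc ▸ Nat.sub_le N a
    by_contra hgt
    have h3 : ℓ + 1 ≤ c := by omega
    have h4 : s * (ℓ + 1) ≤ s * c := Nat.mul_le_mul_left s h3
    have h5 : s * (ℓ + 1) = s * ℓ + s := by ring
    omega
  · intro k hk
    rw [Finset.mem_range] at hk
    have hsub : s * (ℓ - k) + s * k = s * ℓ := by
      rw [← Nat.mul_add]
      congr 1
      omega
    simp only [Finset.mem_filter, Finset.mem_range]
    constructor
    · omega
    · exact ⟨k, by omega⟩
  · intro a ha
    simp only [Finset.mem_filter, Finset.mem_range] at ha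
    obtain ⟨ha1, c, hc⟩ := ha
    rw [hc, Nat.mul_div_cancel_left c hs0]
    have h2 : s * c ≤ N := hc ▸ Nat.sub_le N a
    have hcl : c ≤ ℓ := by
      by_contra hgt
      have h3 : ℓ + 1 ≤ c := by omega
      have h4 : s * (ℓ + 1) ≤ s * c := Nat.mul_le_mul_left s h3
      have h5 : s * (ℓ + 1) = s * ℓ + s := by ring
      omega
    have hsub : s * (ℓ - c) + s * c = s * ℓ := by
      rw [← Nat.mul_add]; congr 1; omega
    omega
  · intro k hk
    rw [Finset.mem_range] at hk
    have hsub : s * (ℓ - k) + s * k = s * ℓ := by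
      rw [← Nat.mul_add]; congr 1; omega
    have h2 : N - (m + s * (ℓ - k)) = s * k := by omega
    rw [h2, Nat.mul_div_cancel_left k hs0]
  · intro a ha
    simp only [Finset.mem_filter, Finset.mem_range] at ha
    obtain ⟨ha1, c, hc⟩ := ha
    rw [hc, Nat.mul_div_cancel_left c hs0]
    have h2 : s * c ≤ N := hc ▸ Nat.sub_le N a
    have hcl : c ≤ ℓ := by
      by_contra hgt
      have h3 : ℓ + 1 ≤ c := by omega
      have h4 : s * (ℓ + 1) ≤ s * c := Nat.mul_le_mul_left s h3
      have h5 : s * (ℓ + 1) = s * ℓ + s := by ring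
      omega
    have hsub : s * (ℓ - c) + s * c = s * ℓ := by
      rw [← Nat.mul_add]; congr 1; omega
    have h6 : m + s * (ℓ - c) = a := by omega
    rw [h6]

section Uniq
variable {O : Type*} [CommRing O] [IsDomain O] [IsNoetherianRing O]
variable {π : O} {q : ℕ} {φ : PowerSeries O}

/-- reduction of `φ` mod `π` is `X^q` -/
theorem map_phi (hφ : ∀ n : ℕ, coeff n φ - (if n = q then 1 else 0) ∈ Ideal.span {π}) : PowerSeries.map (Ideal.Quotient.mk (Ideal.span {π})) φ = X ^ q := by
  ext n
  rw [coeff_map, coeff_X_pow]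
  have h := hφ n
  rw [← Ideal.Quotient.eq_zero_iff_mem, map_sub, sub_eq_zero] at h
  rw [h]
  split_ifs <;> simp

/-- mod-π extraction step -/
theorem coeff_mem_span_of_sum_eq_zero (hq : 0 < q)
    (hφ : ∀ n : ℕ, coeff n φ - (if n = q then 1 else 0) ∈ Ideal.span {π}) (e : Fin q → PowerSeries O)
    (h : ∑ i : Fin q, X ^ (i : ℕ) * PSComp (e i) φ = 0) (i : Fin q) (N : ℕ) :
    coeff N (e i) ∈ Ideal.span {π} := by
  set σ := Ideal.Quotient.mk (Ideal.span {π}) with hσ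
  have h0 : ∑ j : Fin q, (X : PowerSeries (O ⧸ Ideal.span {π})) ^ (j : ℕ) *
      PSComp (PowerSeries.map σ (e j)) (X ^ q) = 0 := by
    have := congrArg (PowerSeries.map σ) h
    rw [map_zero] at this
    rw [← this, map_sum]
    refine Finset.sum_congr rfl fun j _ => ?_
    rw [map_mul, map_pow, PowerSeries.map_X, map_comp, map_phi hφ]
  have h1 := congrArg (coeff (q * N + (i : ℕ))) h0
  rw [map_zero, map_sum, Finset.sum_eq_single i] at h1
  · rw [coeff_X_pow_mul', if_pos (by omega), coeff_comp_Xpow hq] at h1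
    have hd : q ∣ q * N + (i:ℕ) - (i:ℕ) := ⟨N, by omega⟩
    rw [if_pos hd] at h1
    have he : (q * N + (i:ℕ) - (i:ℕ)) / q = N := by
      have : q * N + (i:ℕ) - (i:ℕ) = q * N := by omega
      rw [this, Nat.mul_div_cancel_left N hq]
    rw [he, coeff_map] at h1
    rwa [← Ideal.Quotient.eq_zero_iff_mem]
  · intro j _ hj
    rw [coeff_X_pow_mul']
    split_ifs with hle
    · rw [coeff_comp_Xpow hq]
      split_ifs with hdvd
      · exfalso
        obtain ⟨c, hc⟩ := hdvd
        have h2 : q * N + (i:ℕ) = q * c + (j:ℕ) := by omega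
        have h3 : (q * N + (i:ℕ)) % q = (i:ℕ) := by
          rw [Nat.mul_add_mod]
          exact Nat.mod_eq_of_lt i.isLt
        have h4 : (q * c + (j:ℕ)) % q = (j:ℕ) := by
          rw [Nat.mul_add_mod]
          exact Nat.mod_eq_of_lt j.isLt
        rw [h2, h4] at h3
        exact hj (Fin.ext h3)
      · rfl
    · rfl
  · intro hi
    exact absurd (Finset.mem_univ i) hi

theorem uniq_decomp (hπu : ¬ IsUnit π) (hπ0 : π ≠ 0) (hq : 0 < q)
    (hφ : ∀ n : ℕ, coeff n φ - (if n = q then 1 else 0) ∈ Ideal.span {π}) (e : Fin q → PowerSeries O)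
    (h : ∑ i : Fin q, X ^ (i : ℕ) * PSComp (e i) φ = 0) (i : Fin q) : e i = 0 := by
  -- all coefficients lie in every power of (π)
  have main : ∀ n : ℕ, ∀ e : Fin q → PowerSeries O,
      (∑ i : Fin q, X ^ (i : ℕ) * PSComp (e i) φ = 0) →
      ∀ (i : Fin q) (N : ℕ), coeff N (e i) ∈ Ideal.span {π ^ n} := by
    intro n
    induction n with
    | zero => intro e _ i N; rw [pow_zero, Ideal.span_singleton_one]; exact Submodule.mem_top
    | succ n ih =>
      intro e he i N
      have hdvd : ∀ (j : Fin q) (M : ℕ), π ∣ coeff M (e j) := by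
        intro j M
        exact Ideal.mem_span_singleton.mp (coeff_mem_span_of_sum_eq_zero hq hφ e he j M)
      set e' : Fin q → PowerSeries O := fun j =>
        PowerSeries.mk fun M => (hdvd j M).choose with he'
      have hee : ∀ j, e j = C π * e' j := by
        intro j
        ext M
        rw [coeff_C_mul, he']
        simp only [coeff_mk]
        exact (hdvd j M).choose_spec
      have he'0 : ∑ j : Fin q, X ^ (j : ℕ) * PSComp (e' j) φ = 0 := by
        have h2 : C π * ∑ j : Fin q, X ^ (j : ℕ) * PSComp (e' j) φ = 0 := by
          rw [Finset.mul_sum, ← he]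
          refine Finset.sum_congr rfl fun j _ => ?_
          rw [hee j, comp_C_mul]
          ring
        rcases mul_eq_zero.mp h2 with h3 | h3
        · exfalso
          exact hπ0 (by simpa using congrArg (constantCoeff) h3)
        · exact h3
      obtain ⟨c, hc⟩ := Ideal.mem_span_singleton.mp (ih e' he'0 i N)
      refine Ideal.mem_span_singleton.mpr ⟨c, ?_⟩
      rw [hee i, coeff_C_mul, hc]
      ring
  have hbot : (⨅ n : ℕ, Ideal.span {π} ^ n : Ideal O) = ⊥ :=
    Ideal.iInf_pow_eq_bot_of_isDomain (I := Ideal.span {π}) (by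
      rw [Ne, Ideal.span_singleton_eq_top]; exact hπu)
  ext N
  rw [map_zero]
  have hmem : coeff N (e i) ∈ (⨅ n : ℕ, Ideal.span {π} ^ n : Ideal O) := by
    rw [Submodule.mem_iInf]
    intro n
    rw [Ideal.span_singleton_pow]
    exact main n e h i N
  rw [hbot] at hmem
  exact hmem

end Uniq
section Psi
variable {O : Type*} [CommRing O] [IsDomain O] [IsNoetherianRing O]
variable {π : O} {q : ℕ} (LT : LubinTate O π q)

theorem uniq_decomp' (hπu : ¬ IsUnit π) (hπ0 : π ≠ 0) (hq : 0 < q)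
    (e : Fin q → PowerSeries O)
    (h : ∑ i : Fin q, X ^ (i : ℕ) * PSComp (e i) (LT.endo π) = 0) (i : Fin q) : e i = 0 :=
  uniq_decomp hπu hπ0 hq LT.endo_pi_frob e h i

theorem psi_mul (hπu : ¬ IsUnit π) (hπ0 : π ≠ 0) (hq : 0 < q)
    (D : PowerSeries O → Fin q → PowerSeries O)
    (hD : ∀ f : PowerSeries O,
      f = ∑ i : Fin q, X ^ (i : ℕ) * PSComp (D f i) (LT.endo π))
    (ψ : PowerSeries O → PowerSeries O)
    (hψ : ∀ f : PowerSeries O,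
      C π * ψ f = ∑ i : Fin q, D (X ^ (i : ℕ) * f) i)
    (f u : PowerSeries O) (hf : ψ f = 0) : ψ (f * PSComp u (LT.endo π)) = 0 := by
  have hφc : constantCoeff (LT.endo π) = 0 := LT.endo_const π
  -- uniqueness of decompositions
  have uniqD : ∀ d d' : Fin q → PowerSeries O,
      (∑ i : Fin q, X ^ (i : ℕ) * PSComp (d i) (LT.endo π)
        = ∑ i : Fin q, X ^ (i : ℕ) * PSComp (d' i) (LT.endo π)) → d = d' := by
    intro d d' hdd
    funext j
    have h0 : ∑ i : Fin q, X ^ (i : ℕ) * PSComp (d i - d' i) (LT.endo π) = 0 := by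
      have : ∑ i : Fin q, X ^ (i : ℕ) * PSComp (d i - d' i) (LT.endo π)
          = ∑ i : Fin q, (X ^ (i : ℕ) * PSComp (d i) (LT.endo π)
            - X ^ (i : ℕ) * PSComp (d' i) (LT.endo π)) := by
        refine Finset.sum_congr rfl fun i _ => ?_
        rw [comp_sub, mul_sub]
      rw [this, Finset.sum_sub_distrib, hdd, sub_self]
    have := uniq_decomp' LT hπu hπ0 hq _ h0 j
    exact sub_eq_zero.mp this
  -- D of the product
  have keyD : ∀ i : Fin q, D (X ^ (i:ℕ) * (f * PSComp u (LT.endo π)))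
      = fun j => D (X ^ (i:ℕ) * f) j * u := by
    intro i
    refine uniqD _ _ ?_
    rw [← hD (X ^ (i:ℕ) * (f * PSComp u (LT.endo π)))]
    have h1 : X ^ (i:ℕ) * (f * PSComp u (LT.endo π))
        = (X ^ (i:ℕ) * f) * PSComp u (LT.endo π) := by ring
    rw [h1]
    conv_lhs => rw [hD (X ^ (i:ℕ) * f)]
    rw [Finset.sum_mul]
    refine Finset.sum_congr rfl fun j _ => ?_
    rw [comp_mul hφc, mul_assoc]
  have h2 : C π * ψ (f * PSComp u (LT.endo π)) = 0 := by
    rw [hψ]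
    have : ∀ i : Fin q, D (X ^ (i:ℕ) * (f * PSComp u (LT.endo π))) i
        = D (X ^ (i:ℕ) * f) i * u := fun i => by rw [keyD i]
    rw [Finset.sum_congr rfl fun i _ => this i, ← Finset.sum_mul, ← hψ, hf, mul_zero, zero_mul]
  rcases mul_eq_zero.mp h2 with h3 | h3
  · exact absurd (by simpa using congrArg (constantCoeff) h3) hπ0
  · exact h3

end Psi
section Key
variable {O : Type*} [CommRing O]
variable {π : O} {q : ℕ} (LT : LubinTate O π q)

theorem map_phi' (hq : 0 < q) :
    PowerSeries.map (Ideal.Quotient.mk (Ideal.span {π})) (LT.endo π) = X ^ q := by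
  ext n
  rw [coeff_map, coeff_X_pow]
  have h := LT.endo_pi_frob n
  rw [← Ideal.Quotient.eq_zero_iff_mem, map_sub, sub_eq_zero] at h
  rw [h]
  split_ifs <;> simp

theorem map_phi_pow (hq : 0 < q) {r : ℕ} (hr : 1 ≤ r) :
    PowerSeries.map (Ideal.Quotient.mk (Ideal.span {π})) (LT.endo (π ^ r)) = X ^ (q ^ r) := by
  induction r with
  | zero => omega
  | succ r ih =>
    rcases Nat.eq_or_lt_of_le hr with hr1 | hr2
    · rw [← hr1, pow_one, pow_one, map_phi' LT hq]
    · have hr' : 1 ≤ r := by omega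
      have h1 : (π : O) ^ (r + 1) = π ^ r * π := by ring
      rw [h1, LT.endo_mul, map_comp, ih hr', map_phi' LT hq,
        comp_Xpow (by rw [← coeff_zero_eq_constantCoeff, coeff_X_pow, if_neg (by omega)]),
        ← pow_mul]
      congr 1
      ring

set_option maxHeartbeats 1000000 in
theorem key_cong (hq : 0 < q) (f g : PowerSeries O) (a : O) {r m ℓ : ℕ} (hr : 1 ≤ r)
    (hm : m < q ^ r) :
    coeff (m + q ^ r * ℓ) (PSComp (f * PSComp g (LT.endo (π ^ r))) (LT.endo a))
      - ∑ k ∈ Finset.range (ℓ + 1),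
          coeff (m + q ^ r * (ℓ - k)) (PSComp f (LT.endo a)) *
            coeff k (PSComp g (LT.endo a)) ∈ Ideal.span {π} := by
  have hca : constantCoeff (LT.endo a) = 0 := LT.endo_const a
  have hcr : constantCoeff (LT.endo (π ^ r)) = 0 := LT.endo_const (π ^ r)
  set F := PSComp f (LT.endo a) with hF
  set G := PSComp g (LT.endo a) with hG
  have step1 : PSComp (f * PSComp g (LT.endo (π ^ r))) (LT.endo a)
      = F * PSComp G (LT.endo (π ^ r)) := by
    rw [comp_mul hca]
    congr 1
    rw [comp_assoc hcr hca, hG, comp_assoc hca hcr]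
    congr 1
    rw [← LT.endo_mul, ← LT.endo_mul, mul_comm]
  rw [step1]
  set σ := Ideal.Quotient.mk (Ideal.span (α := O) {π}) with hσ
  rw [← Ideal.Quotient.eq_zero_iff_mem, map_sub, sub_eq_zero, ← hσ]
  have lhs : σ (coeff (m + q ^ r * ℓ) (F * PSComp G (LT.endo (π ^ r))))
      = ∑ k ∈ Finset.range (ℓ + 1),
          coeff (m + q ^ r * (ℓ - k)) (PowerSeries.map σ F) *
            coeff k (PowerSeries.map σ G) := by
    rw [← coeff_map, map_mul, map_comp σ G (LT.endo (π ^ r)), map_phi_pow LT hq hr,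
      coeff_mul_comp_Xpow _ _ hm]
  rw [lhs, map_sum]
  refine Finset.sum_congr rfl fun k _ => ?_
  rw [map_mul, coeff_map, coeff_map]

end Key

end PSAux

/-- If `ψ(f) = ψ(g) = 0`, then `c_(f,m)·c_(g,ℓ) ∈ Pol(o_F[[X]]^(ψ=0)) + π·Int`:
the image of `Pol(o_F[[X]]^(ψ=0))` in `Int/π·Int` is a subring. -/
theorem stmt18 (p : ℕ) [Fact p.Prime] (F : Type*) [Field F] [Algebra ℚ_[p] F]
    [FiniteDimensional ℚ_[p] F] [Algebra ℤ_[p] F] [IsScalarTower ℤ_[p] ℚ_[p] F]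
    (O : Subalgebra ℤ_[p] F) (hO : O = integralClosure ℤ_[p] F)
    (π : ↥O) (hπ : Irreducible π) (q : ℕ)
    (hq : Nat.card (↥O ⧸ Ideal.span {π}) = q)
    (LT : LubinTate ↥O π q)
    -- `D f` is the (unique) decomposition of `f` in the basis `1, X, ..., X^(q-1)` of
    -- `↥O⟦X⟧` over `φ(↥O⟦X⟧)`, where `φ(h) = h(LT.endo π)`:
    (D : PowerSeries ↥O → Fin q → PowerSeries ↥O)
    (hD : ∀ f : PowerSeries ↥O,
      f = ∑ i : Fin q, PowerSeries.X ^ (i : ℕ) * PSComp (D f i) (LT.endo π))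
    -- `ψ` is characterized by `φ(ψ(f)) = (1/π)·Tr(f)`, i.e. `π·ψ(f)` is the sum of the
    -- diagonal entries of the matrix of multiplication by `f` in the above basis:
    (ψ : PowerSeries ↥O → PowerSeries ↥O)
    (hψ : ∀ f : PowerSeries ↥O,
      PowerSeries.C (π) * ψ f = ∑ i : Fin q, D (PowerSeries.X ^ (i : ℕ) * f) i)
    -- `cpoly f n` is the integer-valued polynomial `c_{f,n} ∈ F[T]` with
    -- `f([a](X)) = ∑ n, c_{f,n}(a) X^n`:
    (cpoly : PowerSeries ↥O → ℕ → Polynomial F)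
    (hcpoly : ∀ (f : PowerSeries ↥O) (n : ℕ) (a : ↥O),
      Polynomial.eval (algebraMap ↥O F a) (cpoly f n) =
        algebraMap ↥O F (PowerSeries.coeff n (PSComp f (LT.endo a))))
    (f g : PowerSeries ↥O) (hf : ψ f = 0) (hg : ψ g = 0) (m ℓ : ℕ) :
    ∃ P ∈ Submodule.span ↥O {c : Polynomial F |
        ∃ h : PowerSeries ↥O, ψ h = 0 ∧ ∃ n : ℕ, c = cpoly h n},
      ∃ Q : Polynomial F, (∀ a : ↥O, Q.eval (algebraMap ↥O F a) ∈ O) ∧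
        cpoly f m * cpoly g ℓ = P + algebraMap ↥O F π • Q := by
  haveI : IsNoetherianRing ↥O := by
    rw [hO]
    exact IsIntegralClosure.isNoetherianRing ℤ_[p] ℚ_[p] F ↥(integralClosure ℤ_[p] F)
  -- q ≥ 2
  have hq2 : 2 ≤ q := by
    by_contra hq1
    interval_cases q
    · have h0 := hD PowerSeries.X
      simp only [Finset.univ_eq_empty, Finset.sum_empty] at h0
      have h1 := congrArg (PowerSeries.coeff 1) h0
      rw [PowerSeries.coeff_one_X, map_zero] at h1
      exact one_ne_zero h1
    · have hsub : Subsingleton (↥O ⧸ Ideal.span {π}) :=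
        (Nat.card_eq_one_iff_unique.mp hq).1
      have h1 : (Ideal.Quotient.mk (Ideal.span {π})) 1 = 0 := Subsingleton.elim _ _
      have h2 : (1 : ↥O) ∈ Ideal.span {π} := by
        rwa [Ideal.Quotient.eq_zero_iff_mem] at h1
      have h3 : IsUnit π := by
        rw [← Ideal.span_singleton_eq_top]
        exact Ideal.eq_top_iff_one _ |>.mpr h2
      exact hπ.not_isUnit h3
  have hq0 : 0 < q := by omega
  set α := algebraMap ↥O F with hα
  set M : Submodule ↥O (Polynomial F) := Submodule.span ↥O {c : Polynomial F |
        ∃ h : PowerSeries ↥O, ψ h = 0 ∧ ∃ n : ℕ, c = cpoly h n} with hM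
  -- the main approximation, by strong induction on ℓ
  have main : ∀ ℓ m : ℕ, ∃ P ∈ M, ∀ a : ↥O, ∃ z ∈ Ideal.span {π},
      Polynomial.eval (α a) (cpoly f m * cpoly g ℓ)
        = Polynomial.eval (α a) P + α z := by
    intro ℓ
    induction ℓ using Nat.strong_induction_on with
    | _ ℓ ih =>
    intro m
    set r := m + 1 with hr
    have hm : m < q ^ r := by
      calc m < 2 ^ m := Nat.lt_two_pow_self
      _ ≤ 2 ^ r := Nat.pow_le_pow_right (by omega) (by omega)
      _ ≤ q ^ r := Nat.pow_le_pow_left hq2 r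
    set N := m + q ^ r * ℓ with hN
    set h₀ := f * PSComp g (LT.endo (π ^ r)) with hh₀
    have hψh₀ : ψ h₀ = 0 := by
      have e1 : PSComp g (LT.endo (π ^ r))
          = PSComp (PSComp g (LT.endo (π ^ m))) (LT.endo π) := by
        rw [PSAux.comp_assoc (LT.endo_const _) (LT.endo_const _) g, ← LT.endo_mul,
          ← pow_succ]
      rw [hh₀, e1]
      exact PSAux.psi_mul LT hπ.not_isUnit hπ.ne_zero hq0 D hD ψ hψ f _ hf
    choose Pk hPkM hPk using fun (k : Fin ℓ) => ih k k.isLt (m + q ^ r * (ℓ - k))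
    refine ⟨cpoly h₀ N - ∑ k : Fin ℓ, Pk k, ?_, ?_⟩
    · exact sub_mem (Submodule.subset_span ⟨h₀, hψh₀, N, rfl⟩)
        (Submodule.sum_mem _ fun k _ => hPkM k)
    · intro a
      have key := PSAux.key_cong LT (ℓ := ℓ) hq0 f g a (by omega : 1 ≤ r) hm
      choose zk hzkmem hzk using fun (k : Fin ℓ) => hPk k a
      set Cn := PowerSeries.coeff N (PSComp h₀ (LT.endo a)) with hCn
      set z₀ := Cn - ∑ k ∈ Finset.range (ℓ + 1),
          PowerSeries.coeff (m + q ^ r * (ℓ - k)) (PSComp f (LT.endo a)) *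
            PowerSeries.coeff k (PSComp g (LT.endo a)) with hz₀
      refine ⟨-(z₀ + ∑ k : Fin ℓ, zk k), neg_mem (add_mem key
        (Submodule.sum_mem _ fun k _ => hzkmem k)), ?_⟩
      have hsum : ∑ k ∈ Finset.range (ℓ + 1),
          PowerSeries.coeff (m + q ^ r * (ℓ - k)) (PSComp f (LT.endo a)) *
            PowerSeries.coeff k (PSComp g (LT.endo a))
          = (∑ k : Fin ℓ, PowerSeries.coeff (m + q ^ r * (ℓ - (k:ℕ))) (PSComp f (LT.endo a)) *
              PowerSeries.coeff (k:ℕ) (PSComp g (LT.endo a)))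
            + PowerSeries.coeff m (PSComp f (LT.endo a)) *
                PowerSeries.coeff ℓ (PSComp g (LT.endo a)) := by
        rw [Finset.sum_range_succ, Nat.sub_self, Nat.mul_zero, Nat.add_zero,
          ← Fin.sum_univ_eq_sum_range]
      have hO1 : PowerSeries.coeff m (PSComp f (LT.endo a)) *
            PowerSeries.coeff ℓ (PSComp g (LT.endo a))
          = Cn - z₀ - ∑ k : Fin ℓ,
              PowerSeries.coeff (m + q ^ r * (ℓ - (k:ℕ))) (PSComp f (LT.endo a)) *
                PowerSeries.coeff (k:ℕ) (PSComp g (LT.endo a)) := by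
        rw [hz₀, hsum]
        ring
      have e1 : Polynomial.eval (α a) (cpoly f m * cpoly g ℓ)
          = α (PowerSeries.coeff m (PSComp f (LT.endo a)) *
              PowerSeries.coeff ℓ (PSComp g (LT.endo a))) := by
        rw [Polynomial.eval_mul, hcpoly f m a, hcpoly g ℓ a, map_mul]
      have e2 : ∀ k : Fin ℓ, Polynomial.eval (α a) (Pk k)
          = α (PowerSeries.coeff (m + q ^ r * (ℓ - (k:ℕ))) (PSComp f (LT.endo a)) *
              PowerSeries.coeff (k:ℕ) (PSComp g (LT.endo a))) - α (zk k) := by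
        intro k
        have h5 := hzk k
        rw [Polynomial.eval_mul, hcpoly f _ a, hcpoly g _ a, ← map_mul] at h5
        rw [h5]
        ring
      rw [e1, hO1, Polynomial.eval_sub, Polynomial.eval_finset_sum, hcpoly h₀ N a]
      rw [Finset.sum_congr rfl fun k _ => e2 k]
      rw [map_sub, map_sub, map_sum, map_neg, map_add, map_sum, ← hCn]
      rw [Finset.sum_sub_distrib]
      ring
  obtain ⟨P, hPM, hP⟩ := main ℓ m
  have hαinj : Function.Injective α := by
    rw [hα, Subalgebra.algebraMap_eq]
    exact Subtype.val_injective
  have hαπ : α π ≠ 0 := fun h0 => hπ.ne_zero (hαinj (by rwa [map_zero]))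
  refine ⟨P, hPM, (α π)⁻¹ • (cpoly f m * cpoly g ℓ - P), ?_, ?_⟩
  · intro a
    obtain ⟨z, hz, hza⟩ := hP a
    obtain ⟨w, hw⟩ := Ideal.mem_span_singleton.mp hz
    rw [Polynomial.eval_smul, Polynomial.eval_sub, smul_eq_mul, hza]
    have : Polynomial.eval (α a) P + α z - Polynomial.eval (α a) P = α z := by ring
    rw [this, hw, map_mul, inv_mul_cancel_left₀ hαπ]
    rw [hα, Subalgebra.algebraMap_eq]
    exact SetLike.coe_mem w
  · rw [smul_smul, mul_inv_cancel₀ hαπ, one_smul]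
    ring
end
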